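/- arXiv:2011.07913 — 5 statements merged into one kernel-verified Lean document; each statement's English description precedes it below -/
import Mathlib

section
/- Let (N,v) be a TU-game (v : 2^N → ℝ with v(∅) = 0) and P = {P_1,…,P_m} a partition of N. For i ∈ N let P_(i) denote the block of P containing i and p_i = |P_(i)|. Then the Owen value admits the permutation formulation: for every i ∈ N, Σ_{R ⊆ P∖{P_(i)}} Σ_{S ⊆ P_(i)∖{i}} [ |S|!·(p_i−|S|−1)!·|R|!·(m−|R|−1)! / (p_i!·m!) ] · ( v(∪_{P_l∈R} P_l ∪ S ∪ {i}) − v(∪_{P_l∈R} P_l ∪ S) ) = (1/|Π_P(N)|) Σ_{σ∈Π_P(N)} ( v(P_i^σ ∪ {i}) − v(P_i^σ) ), where Π_P(N) is the set of permutations of N compatible with P and P_i^σ = {j ∈ N : σ(j) < σ(i)}. -/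
open Finset
open scoped Classical
set_option linter.unusedSectionVars false
set_option maxHeartbeats 1000000

/-- The set of predecessors of `i` under the permutation `σ`. -/
def preds {N : Type} [Fintype N] (σ : N ≃ Fin (Fintype.card N)) (i : N) : Finset N :=
  Finset.univ.filter (fun j => σ j < σ i)

/-- The marginal payment `x(σ)_i = min (c i) (max 0 (E - ∑_{j ∈ P_i^σ} c j))`. -/
noncomputable def payment {N : Type} [Fintype N] (c : N → ℝ) (E : ℝ)
    (σ : N ≃ Fin (Fintype.card N)) (i : N) : ℝ :=
  min (c i) (max 0 (E - ∑ j ∈ preds σ i, c j))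

/-- A permutation `σ` of `N` is compatible with the partition `P` if whenever `i` and
`j` lie in the same block and `σ i < σ k < σ j`, then `k` lies in that same block. -/
def Compatible {N : Type} [Fintype N] [DecidableEq N]
    (P : Finpartition (Finset.univ : Finset N)) (σ : N ≃ Fin (Fintype.card N)) : Prop :=
  ∀ i j k : N, (∃ B ∈ P.parts, i ∈ B ∧ j ∈ B) → σ i < σ k → σ k < σ j →
    ∃ B ∈ P.parts, i ∈ B ∧ j ∈ B ∧ k ∈ B

/-- `Π_P(N)`: the finite set of permutations of `N` compatible with `P`. -/
noncomputable def compatPerms {N : Type} [Fintype N] [DecidableEq N]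
    (P : Finpartition (Finset.univ : Finset N)) : Finset (N ≃ Fin (Fintype.card N)) :=
  Finset.univ.filter (fun σ => Compatible P σ)

/-- The RA-random arrival rule with a priori unions:
`RA^P_i = (1/|Π_P(N)|) ∑_{σ ∈ Π_P(N)} x(σ)_i`. -/
noncomputable def RAU {N : Type} [Fintype N] [DecidableEq N]
    (c : N → ℝ) (E : ℝ) (P : Finpartition (Finset.univ : Finset N)) (i : N) : ℝ :=
  (1 / ((compatPerms P).card : ℝ)) * ∑ σ ∈ compatPerms P, payment c E σ i

namespace OwenAux

variable {α : Type} [Fintype α] [DecidableEq α]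

def predsE {n : ℕ} (σ : α ≃ Fin n) (x : α) : Finset α :=
  Finset.univ.filter (fun j => σ j < σ x)

lemma card_filter_lt_fin {n : ℕ} (k : Fin n) :
    ((Finset.univ : Finset (Fin n)).filter (fun j => j < k)).card = k := by
  rw [← Finset.card_image_of_injective _ Fin.val_injective]
  convert Finset.card_range k.val using 2
  ext a
  simp only [Finset.mem_image, Finset.mem_filter, Finset.mem_univ, true_and,
    Finset.mem_range]
  constructor
  · rintro ⟨j, hj, rfl⟩; exact hj
  · intro ha
    exact ⟨⟨a, lt_trans ha k.isLt⟩, by simpa [Fin.lt_def] using ha, rfl⟩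

lemma card_predsE {n : ℕ} (σ : α ≃ Fin n) (x : α) :
    (predsE σ x).card = (σ x : ℕ) := by
  rw [← card_filter_lt_fin (σ x)]
  apply Finset.card_bij (fun a _ => σ a)
  · intro a ha; simp only [predsE, mem_filter, mem_univ, true_and] at ha ⊢; exact ha
  · intro a _ b _ h; exact σ.injective h
  · intro b hb
    refine ⟨σ.symm b, ?_, by simp⟩
    simp only [predsE, mem_filter, mem_univ, true_and] at hb ⊢
    simpa using hb

lemma mem_predsE {n : ℕ} (σ : α ≃ Fin n) (x j : α) :
    j ∈ predsE σ x ↔ σ j < σ x := by simp [predsE]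

/-- number of permutations with a prescribed predecessor set. -/
lemma card_fiber {n : ℕ} (hn : Fintype.card α = n) (x : α) (T : Finset α) (hxT : x ∉ T) :
    (Finset.univ.filter (fun σ : α ≃ Fin n => predsE σ x = T)).card
      = Nat.factorial T.card * Nat.factorial (n - T.card - 1) := by
  classical
  obtain ⟨s, hs⟩ : ∃ s, T.card = s := ⟨_, rfl⟩
  have U : Finset α := Finset.univ \ insert x T
  obtain ⟨U, hUspec⟩ : ∃ U : Finset α, ∀ a, a ∈ U ↔ (a ∉ T ∧ a ≠ x) := by
    refine ⟨Finset.univ \ insert x T, fun a => ?_⟩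
    simp [and_comm]
  have hsn : s + 1 ≤ n := by
    have h1 : (insert x T).card = s + 1 := by
      rw [Finset.card_insert_of_notMem hxT, hs]
    rw [← h1, ← hn, ← Finset.card_univ]
    exact Finset.card_le_card (Finset.subset_univ _)
  have hsltn : s < n := by omega
  have hUeq : U = Finset.univ \ insert x T := by
    ext a
    simp only [hUspec, Finset.mem_sdiff, Finset.mem_univ, Finset.mem_insert, true_and]
    tauto
  have hUcard : U.card = n - s - 1 := by
    rw [hUeq, Finset.card_sdiff_of_subset (Finset.subset_univ _), Finset.card_univ, hn,
      Finset.card_insert_of_notMem hxT, hs, Nat.sub_sub, Nat.add_comm]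
  obtain ⟨u, hu⟩ : ∃ u, U.card = u := ⟨_, rfl⟩
  have huval : u = n - s - 1 := by rw [← hu, hUcard]
  have memU : ∀ a : α, a ∉ T → a ≠ x → a ∈ U := fun a h1 h2 => (hUspec a).2 ⟨h1, h2⟩
  have cardT : Fintype.card {a // a ∈ T} = s := by rw [Fintype.card_coe, hs]
  have cardU : Fintype.card {a // a ∈ U} = u := by rw [Fintype.card_coe, hu]
  let bfun : ({a // a ∈ T} ≃ Fin s) → ({a // a ∈ U} ≃ Fin u) → α → Fin n :=
    fun e f a =>
      if h : a ∈ T then ⟨(e ⟨a, h⟩ : ℕ), lt_of_lt_of_le (e ⟨a, h⟩).isLt (le_of_lt hsltn)⟩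
      else if h' : a = x then ⟨s, hsltn⟩
      else ⟨s + 1 + (f ⟨a, memU a h h'⟩ : ℕ), by
        have := (f ⟨a, memU a h h'⟩).isLt; omega⟩
  have bfun_inj : ∀ e f, Function.Injective (bfun e f) := by
    intro e f a b hab
    by_cases ha : a ∈ T <;> by_cases hb : b ∈ T
    · simp only [bfun, dif_pos ha, dif_pos hb, Fin.mk.injEq] at hab
      have := e.injective (Fin.val_injective hab)
      simpa using congrArg Subtype.val this
    · exfalso
      by_cases hbx : b = x
      · simp only [bfun, dif_pos ha, dif_neg hb, dif_pos hbx, Fin.mk.injEq] at hab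
        exact absurd hab (Nat.ne_of_lt (e ⟨a, ha⟩).isLt)
      · simp only [bfun, dif_pos ha, dif_neg hb, dif_neg hbx, Fin.mk.injEq] at hab
        have := (e ⟨a, ha⟩).isLt; omega
    · exfalso
      by_cases hax : a = x
      · simp only [bfun, dif_neg ha, dif_pos hax, dif_pos hb, Fin.mk.injEq] at hab
        exact absurd hab.symm (Nat.ne_of_lt (e ⟨b, hb⟩).isLt)
      · simp only [bfun, dif_neg ha, dif_neg hax, dif_pos hb, Fin.mk.injEq] at hab
        have := (e ⟨b, hb⟩).isLt; omega
    · by_cases hax : a = x <;> by_cases hbx : b = x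
      · rw [hax, hbx]
      · exfalso
        simp only [bfun, dif_neg ha, dif_neg hb, dif_pos hax, dif_neg hbx,
          Fin.mk.injEq] at hab
        omega
      · exfalso
        simp only [bfun, dif_neg ha, dif_neg hb, dif_pos hbx, dif_neg hax,
          Fin.mk.injEq] at hab
        omega
      · simp only [bfun, dif_neg ha, dif_neg hb, dif_neg hax, dif_neg hbx,
          Fin.mk.injEq] at hab
        have h2 := f.injective (Fin.val_injective
          (by omega : ((f ⟨a, memU a ha hax⟩) : ℕ) = (f ⟨b, memU b hb hbx⟩ : ℕ)))
        simpa using congrArg Subtype.val h2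
  let build : ({a // a ∈ T} ≃ Fin s) → ({a // a ∈ U} ≃ Fin u) → (α ≃ Fin n) :=
    fun e f => Equiv.ofBijective (bfun e f)
      ((Fintype.bijective_iff_injective_and_card _).2 ⟨bfun_inj e f, by simp [hn]⟩)
  have build_apply : ∀ e f a, build e f a = bfun e f a := fun _ _ _ => rfl
  have build_preds : ∀ e f, predsE (build e f) x = T := by
    intro e f
    ext a
    simp only [mem_predsE]
    have hbx : (build e f x : ℕ) = s := by
      rw [build_apply]; simp [bfun, hxT]
    rw [Fin.lt_def, hbx, build_apply]
    by_cases ha : a ∈ T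
    · simp only [bfun, dif_pos ha]
      exact ⟨fun _ => ha, fun _ => (e ⟨a, ha⟩).isLt⟩
    · by_cases hax : a = x
      · simp only [bfun, dif_neg ha, dif_pos hax]
        constructor
        · intro h; omega
        · intro h; exact absurd h ha
      · simp only [bfun, dif_neg ha, dif_neg hax]
        constructor
        · intro h; omega
        · intro h; exact absurd h ha
  have sigx : ∀ σ : α ≃ Fin n, predsE σ x = T → (σ x : ℕ) = s := by
    intro σ h
    rw [← hs, ← h, card_predsE σ x]
  have hlt : ∀ (σ : α ≃ Fin n), predsE σ x = T → ∀ a, a ∈ T → (σ a : ℕ) < s := by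
    intro σ h a ha
    have hmem : a ∈ predsE σ x := by rw [h]; exact ha
    rw [mem_predsE, Fin.lt_def] at hmem
    rw [← sigx σ h]
    exact hmem
  have hgt : ∀ (σ : α ≃ Fin n), predsE σ x = T → ∀ a, a ∈ U → s + 1 ≤ (σ a : ℕ) := by
    intro σ h a ha
    obtain ⟨h1, h2⟩ := (hUspec a).1 ha
    have hnotlt : ¬ (σ a : ℕ) < (σ x : ℕ) := by
      intro hc
      apply h1
      rw [← h, mem_predsE, Fin.lt_def]
      exact hc
    have hne : (σ a : ℕ) ≠ (σ x : ℕ) := by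
      intro hc
      exact h2 (σ.injective (Fin.val_injective hc))
    have := sigx σ h
    omega
  let fiber := {σ : α ≃ Fin n // predsE σ x = T}
  let fwd : fiber → ({a // a ∈ T} ≃ Fin s) × ({a // a ∈ U} ≃ Fin u) := by
    intro ⟨σ, hσ⟩
    refine ⟨Equiv.ofBijective (fun a => (⟨(σ a.1 : ℕ), hlt σ hσ a.1 a.2⟩ : Fin s)) ?_,
      Equiv.ofBijective (fun a => (⟨(σ a.1 : ℕ) - (s+1), ?_⟩ : Fin u)) ?_⟩
    · refine (Fintype.bijective_iff_injective_and_card _).2 ⟨?_, by simp [cardT]⟩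
      intro a b hab
      exact Subtype.ext (σ.injective (Fin.val_injective (by
        simpa [Fin.mk.injEq] using hab)))
    · have h1 := hgt σ hσ a.1 a.2
      have h2 : (σ a.1 : ℕ) < n := (σ a.1).isLt
      omega
    · refine (Fintype.bijective_iff_injective_and_card _).2 ⟨?_, by simp [cardU]⟩
      intro a b hab
      have h1 := hgt σ hσ a.1 a.2
      have h2 := hgt σ hσ b.1 b.2
      simp only [Fin.mk.injEq] at hab
      exact Subtype.ext (σ.injective (Fin.val_injective (by omega)))
  let bwd : ({a // a ∈ T} ≃ Fin s) × ({a // a ∈ U} ≃ Fin u) → fiber :=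
    fun ef => ⟨build ef.1 ef.2, build_preds ef.1 ef.2⟩
  have leftinv : Function.LeftInverse bwd fwd := by
    rintro ⟨σ, hσ⟩
    apply Subtype.ext
    apply Equiv.ext
    intro a
    show bfun _ _ a = σ a
    by_cases ha : a ∈ T
    · simp only [bfun, dif_pos ha]
      exact Fin.ext rfl
    · by_cases hax : a = x
      · subst hax
        simp only [bfun, dif_neg ha, dif_pos rfl]
        exact Fin.ext (sigx σ hσ).symm
      · simp only [bfun, dif_neg ha, dif_neg hax]
        apply Fin.ext
        have := hgt σ hσ a (memU a ha hax)
        show s + 1 + ((σ a : ℕ) - (s+1)) = (σ a : ℕ)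
        omega
  have rightinv : Function.RightInverse bwd fwd := by
    rintro ⟨e, f⟩
    apply Prod.ext
    · apply Equiv.ext
      intro a
      apply Fin.ext
      show ((build e f) a.1 : ℕ) = (e a : ℕ)
      rw [build_apply]
      simp [bfun, a.2]
    · apply Equiv.ext
      intro a
      apply Fin.ext
      show ((build e f) a.1 : ℕ) - (s + 1) = (f a : ℕ)
      rw [build_apply]
      obtain ⟨h1, h2⟩ := (hUspec a.1).1 a.2
      simp [bfun, h1, h2]
  let E : fiber ≃ ({a // a ∈ T} ≃ Fin s) × ({a // a ∈ U} ≃ Fin u) :=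
    ⟨fwd, bwd, leftinv, rightinv⟩
  have hcardfib : (Finset.univ.filter (fun σ : α ≃ Fin n => predsE σ x = T)).card
      = Fintype.card fiber := (Fintype.card_subtype _).symm
  rw [hcardfib, Fintype.card_congr E, Fintype.card_prod,
    Fintype.card_equiv (T.equivFin.trans (finCongr (by rw [hs]))),
    Fintype.card_equiv (U.equivFin.trans (finCongr (by rw [hu]))),
    cardT, cardU, hs, huval]

/-- summation form of the counting lemma. -/
lemma sum_predsE {n : ℕ} (hn : Fintype.card α = n) (x : α) (g : Finset α → ℝ) :
    ∑ σ : α ≃ Fin n, g (predsE σ x)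
      = ∑ T ∈ (Finset.univ.erase x).powerset,
          ((Nat.factorial T.card * Nat.factorial (n - T.card - 1) : ℕ) : ℝ) * g T := by
  classical
  have hmaps : ∀ σ : α ≃ Fin n, σ ∈ (Finset.univ : Finset (α ≃ Fin n)) →
      predsE σ x ∈ (Finset.univ.erase x).powerset := by
    intro σ _
    rw [Finset.mem_powerset]
    intro j hj
    rw [mem_predsE] at hj
    rw [Finset.mem_erase]
    exact ⟨fun hc => absurd (hc ▸ hj) (lt_irrefl _), Finset.mem_univ j⟩
  rw [← Finset.sum_fiberwise_of_maps_to' hmaps g]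
  apply Finset.sum_congr rfl
  intro T hT
  rw [Finset.mem_powerset] at hT
  have hxT : x ∉ T := fun hc => (Finset.notMem_erase x _) (hT hc)
  rw [Finset.sum_const, card_fiber hn x T hxT, nsmul_eq_mul]

end OwenAux

namespace OwenPart
open OwenAux

variable {N : Type} [Fintype N] [DecidableEq N]

abbrev PT (P : Finpartition (Finset.univ : Finset N)) := {b : Finset N // b ∈ P.parts}

variable (P : Finpartition (Finset.univ : Finset N))

abbrev blk (x : N) : PT P := ⟨P.part x, P.part_mem.2 (Finset.mem_univ x)⟩

lemma mem_blk (x : N) : x ∈ (blk P x).1 := P.mem_part (Finset.mem_univ x)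

lemma blk_eq_of_mem {x : N} {b : PT P} (hx : x ∈ b.1) : blk P x = b :=
  Subtype.ext (P.part_eq_of_mem b.2 hx)

-- ===================== dichotomy =====================

lemma block_dichotomy {σ : N ≃ Fin (Fintype.card N)} (hσ : Compatible P σ)
    (x : N) {b : PT P} (hb : b ≠ blk P x) :
    (∀ y ∈ b.1, σ y < σ x) ∨ (∀ y ∈ b.1, σ x < σ y) := by
  have hxb : x ∉ b.1 := fun hc => hb (blk_eq_of_mem P hc).symm
  by_cases hall : ∀ y ∈ b.1, σ y < σ x
  · exact Or.inl hall
  · right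
    push_neg at hall
    obtain ⟨z, hz, hzx⟩ := hall
    have hxz : σ x < σ z := by
      rcases lt_or_eq_of_le hzx with h | h
      · exact h
      · exact absurd (σ.injective (Fin.val_injective (congrArg Fin.val h))) 
          (fun hc => hxb (hc ▸ hz))
    intro y hy
    by_contra hxy
    push_neg at hxy
    have hyx : σ y < σ x := by
      rcases lt_or_eq_of_le hxy with h | h
      · exact h
      · exact absurd (σ.injective (Fin.val_injective (congrArg Fin.val h)))
          (fun hc => hxb (hc ▸ hy))
    obtain ⟨B', hB', hyB', hzB', hxB'⟩ := hσ y z x ⟨b.1, b.2, hy, hz⟩ hyx hxz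
    have : B' = b.1 := P.eq_of_mem_parts hB' b.2 hyB' hy
    exact hxb (this ▸ hxB')

-- ===================== key and recovery =====================

noncomputable def keyF (σ : N ≃ Fin (Fintype.card N)) (b : PT P) : Fin (Fintype.card N) :=
  (b.1.image σ).min' ((P.nonempty_of_mem_parts b.2).image σ)

lemma keyF_mem (σ) (b : PT P) : ∃ y ∈ b.1, σ y = keyF P σ b := by
  have := Finset.min'_mem (b.1.image σ) ((P.nonempty_of_mem_parts b.2).image σ)
  rw [Finset.mem_image] at this
  exact this

lemma keyF_le (σ) (b : PT P) {y : N} (hy : y ∈ b.1) : keyF P σ b ≤ σ y :=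
  Finset.min'_le _ _ (Finset.mem_image_of_mem σ hy)

lemma keyF_inj (σ) : Function.Injective (keyF P σ) := by
  intro b c h
  obtain ⟨y, hy, hy'⟩ := keyF_mem P σ b
  obtain ⟨z, hz, hz'⟩ := keyF_mem P σ c
  have : y = z := σ.injective (by rw [hy', hz', h])
  exact Subtype.ext (P.eq_of_mem_parts b.2 c.2 hy (this ▸ hz))

noncomputable def tauOf (σ : N ≃ Fin (Fintype.card N)) : PT P ≃ Fin P.parts.card := by
  refine Equiv.ofBijective
    (fun b => ⟨(Finset.univ.filter (fun c : PT P => keyF P σ c < keyF P σ b)).card, ?_⟩)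
    ((Fintype.bijective_iff_injective_and_card _).2 ⟨?_, by simp⟩)
  · have h1 : (Finset.univ.filter (fun c : PT P => keyF P σ c < keyF P σ b))
        ⊂ Finset.univ := by
      rw [Finset.ssubset_iff_of_subset (Finset.subset_univ _)]
      exact ⟨b, Finset.mem_univ b, by simp⟩
    have := Finset.card_lt_card h1
    rwa [Finset.card_univ, Fintype.card_coe] at this
  · intro b c h
    simp only [Fin.mk.injEq] at h
    by_contra hbc
    have hk : keyF P σ b ≠ keyF P σ c := fun hc => hbc (keyF_inj P σ hc)
    have key_mono : ∀ b' c' : PT P, keyF P σ b' < keyF P σ c' →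
        (Finset.univ.filter (fun d : PT P => keyF P σ d < keyF P σ b')).card
          < (Finset.univ.filter (fun d : PT P => keyF P σ d < keyF P σ c')).card := by
      intro b' c' hlt
      apply Finset.card_lt_card
      rw [Finset.ssubset_iff_of_subset]
      · exact ⟨b', by simp [hlt], by simp⟩
      · intro d hd
        rw [Finset.mem_filter] at hd ⊢
        exact ⟨hd.1, lt_trans hd.2 hlt⟩
    rcases lt_or_gt_of_ne hk with hlt | hgt
    · exact absurd h (Nat.ne_of_lt (key_mono b c hlt))
    · exact absurd h.symm (Nat.ne_of_lt (key_mono c b hgt))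

lemma tauOf_val (σ) (b : PT P) :
    (tauOf P σ b : ℕ) = (Finset.univ.filter (fun c : PT P => keyF P σ c < keyF P σ b)).card := rfl

lemma tauOf_lt_iff (σ) (b c : PT P) :
    tauOf P σ b < tauOf P σ c ↔ keyF P σ b < keyF P σ c := by
  have key_mono : ∀ b' c' : PT P, keyF P σ b' < keyF P σ c' → tauOf P σ b' < tauOf P σ c' := by
    intro b' c' hlt
    rw [Fin.lt_def, tauOf_val, tauOf_val]
    apply Finset.card_lt_card
    rw [Finset.ssubset_iff_of_subset]
    · exact ⟨b', by simp [hlt], by simp⟩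
    · intro d hd
      rw [Finset.mem_filter] at hd ⊢
      exact ⟨hd.1, lt_trans hd.2 hlt⟩
  constructor
  · intro h
    rcases lt_trichotomy (keyF P σ b) (keyF P σ c) with hlt | heq | hgt
    · exact hlt
    · exact absurd (keyF_inj P σ heq ▸ h) (lt_irrefl _)
    · exact absurd (lt_trans h (key_mono c b hgt)) (lt_irrefl _)
  · exact key_mono b c

noncomputable def rhoOf (σ : N ≃ Fin (Fintype.card N)) (b : PT P) :
    {x // x ∈ b.1} ≃ Fin b.1.card := by
  refine Equiv.ofBijective
    (fun xs => ⟨(b.1.filter (fun y => σ y < σ xs.1)).card, ?_⟩)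
    ((Fintype.bijective_iff_injective_and_card _).2 ⟨?_, by simp⟩)
  · have h1 : (b.1.filter (fun y => σ y < σ xs.1)) ⊂ b.1 := by
      rw [Finset.ssubset_iff_of_subset (Finset.filter_subset _ _)]
      exact ⟨xs.1, xs.2, by simp⟩
    exact Finset.card_lt_card h1
  · intro xs ys h
    simp only [Fin.mk.injEq] at h
    by_contra hxy
    have hne : σ xs.1 ≠ σ ys.1 := fun hc => hxy (Subtype.ext (σ.injective hc))
    have mono : ∀ xs' ys' : {x // x ∈ b.1}, σ xs'.1 < σ ys'.1 →
        (b.1.filter (fun y => σ y < σ xs'.1)).card < (b.1.filter (fun y => σ y < σ ys'.1)).card := by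
      intro xs' ys' hlt
      apply Finset.card_lt_card
      rw [Finset.ssubset_iff_of_subset]
      · exact ⟨xs'.1, by simp [xs'.2, hlt], by simp⟩
      · intro d hd
        rw [Finset.mem_filter] at hd ⊢
        exact ⟨hd.1, lt_trans hd.2 hlt⟩
    rcases lt_or_gt_of_ne hne with hlt | hgt
    · exact absurd h (Nat.ne_of_lt (mono xs ys hlt))
    · exact absurd h.symm (Nat.ne_of_lt (mono ys xs hgt))

lemma rhoOf_val (σ) (b : PT P) (xs : {x // x ∈ b.1}) :
    (rhoOf P σ b xs : ℕ) = (b.1.filter (fun y => σ y < σ xs.1)).card := rfl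

lemma keyF_lt_iff {σ : N ≃ Fin (Fintype.card N)} (hσ : Compatible P σ) (x : N) (b : PT P) :
    keyF P σ b < keyF P σ (blk P x) ↔ (b ≠ blk P x ∧ ∀ y ∈ b.1, σ y < σ x) := by
  constructor
  · intro h
    have hne : b ≠ blk P x := fun hc => absurd (hc ▸ h) (lt_irrefl _)
    refine ⟨hne, ?_⟩
    rcases block_dichotomy P hσ x hne with hbelow | habove
    · exact hbelow
    · exfalso
      obtain ⟨y0, hy0, hy0'⟩ := keyF_mem P σ b
      have h1 : σ x < σ y0 := habove y0 hy0
      have h2 : keyF P σ (blk P x) ≤ σ x := keyF_le P σ (blk P x) (mem_blk P x)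
      have h3 : keyF P σ b < σ y0 := lt_trans (lt_of_lt_of_le h h2) h1
      rw [hy0'] at h3
      exact absurd h3 (lt_irrefl _)
  · rintro ⟨hne, hbelow⟩
    obtain ⟨y0, hy0, hy0'⟩ := keyF_mem P σ b
    obtain ⟨z, hz, hz'⟩ := keyF_mem P σ (blk P x)
    by_contra hcon
    push_neg at hcon
    rw [← hy0', ← hz'] at hcon
    have hy0x : σ y0 < σ x := hbelow y0 hy0
    rcases lt_or_eq_of_le hcon with hlt | heq
    · -- σ z < σ y0 < σ x, z and x in blk x
      obtain ⟨B', hB', hzB', hxB', hy0B'⟩ :=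
        hσ z x y0 ⟨(blk P x).1, (blk P x).2, hz, mem_blk P x⟩ hlt hy0x
      have hBeq : B' = (blk P x).1 := P.eq_of_mem_parts hB' (blk P x).2 hzB' hz
      have : y0 ∈ (blk P x).1 := hBeq ▸ hy0B'
      exact hne (Subtype.ext (P.eq_of_mem_parts b.2 (blk P x).2 hy0 this))
    · have : z = y0 := σ.injective heq
      have : y0 ∈ (blk P x).1 := this ▸ hz
      exact hne (Subtype.ext (P.eq_of_mem_parts b.2 (blk P x).2 hy0 this))

lemma card_eq_sum_parts (A : Finset N) :
    A.card = ∑ b : PT P, (b.1 ∩ A).card := by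
  rw [Finset.sum_coe_sort P.parts (fun b => (b ∩ A).card)]
  have hbu : P.parts.biUnion (fun b => b ∩ A) = A := by
    ext y
    simp only [Finset.mem_biUnion, Finset.mem_inter]
    constructor
    · rintro ⟨b, hb, _, hy⟩
      exact hy
    · intro hy
      exact ⟨P.part y, P.part_mem.2 (Finset.mem_univ y),
        P.mem_part (Finset.mem_univ y), hy⟩
  conv_lhs => rw [← hbu]
  apply Finset.card_biUnion
  intro b hb c hc hbc
  have hd : Disjoint b c := P.disjoint hb hc hbc
  exact Finset.disjoint_left.2 fun a ha ha' =>
    (Finset.disjoint_left.1 hd (Finset.mem_inter.1 ha).1) (Finset.mem_inter.1 ha').1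

/-- the equiv structure type -/
abbrev DT := (PT P ≃ Fin P.parts.card) × ((b : PT P) → ({x // x ∈ b.1} ≃ Fin b.1.card))

def offset (τ : PT P ≃ Fin P.parts.card) (b : PT P) : ℕ :=
  ∑ b' ∈ Finset.univ.filter (fun b' : PT P => τ b' < τ b), b'.1.card

def rhoVal (ρ : (b : PT P) → ({x // x ∈ b.1} ≃ Fin b.1.card)) (x : N) : ℕ :=
  (ρ (blk P x) ⟨x, mem_blk P x⟩ : ℕ)

lemma rho_congr (ρ : (b : PT P) → ({x // x ∈ b.1} ≃ Fin b.1.card)) {b c : PT P}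
    (h : b = c) (x : N) (hx : x ∈ b.1) :
    (ρ b ⟨x, hx⟩ : ℕ) = (ρ c ⟨x, h ▸ hx⟩ : ℕ) := by subst h; rfl

def psiVal (τ : PT P ≃ Fin P.parts.card) (ρ : (b : PT P) → ({x // x ∈ b.1} ≃ Fin b.1.card))
    (x : N) : ℕ :=
  offset P τ (blk P x) + rhoVal P ρ x

lemma sum_card_PT : ∑ b' : PT P, b'.1.card = Fintype.card N := by
  rw [Finset.sum_coe_sort P.parts (fun b => b.card), P.sum_card_parts, Finset.card_univ]

lemma rhoVal_lt (ρ) (x : N) : rhoVal P ρ x < (blk P x).1.card := (ρ (blk P x) _).isLt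

lemma offset_add_card_le (τ) (b : PT P) :
    offset P τ b + b.1.card ≤ Fintype.card N := by
  have h1 : offset P τ b + b.1.card
      = ∑ b' ∈ insert b (Finset.univ.filter (fun b' : PT P => τ b' < τ b)), b'.1.card := by
    rw [Finset.sum_insert (by simp), offset, Nat.add_comm]
  rw [h1, ← sum_card_PT P]
  exact Finset.sum_le_sum_of_subset (Finset.subset_univ _)

lemma psiVal_lt (τ ρ) (x : N) : psiVal P τ ρ x < Fintype.card N :=
  lt_of_lt_of_le (by
    have := rhoVal_lt P ρ x
    exact Nat.add_lt_add_left this _) (offset_add_card_le P τ (blk P x))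

lemma offset_mono (τ) {b b' : PT P} (h : τ b < τ b') :
    offset P τ b + b.1.card ≤ offset P τ b' := by
  have h1 : offset P τ b + b.1.card
      = ∑ c ∈ insert b (Finset.univ.filter (fun c : PT P => τ c < τ b)), c.1.card := by
    rw [Finset.sum_insert (by simp), offset, Nat.add_comm]
  rw [h1, offset]
  apply Finset.sum_le_sum_of_subset
  intro c hc
  rw [Finset.mem_insert] at hc
  rw [Finset.mem_filter]
  refine ⟨Finset.mem_univ c, ?_⟩
  rcases hc with rfl | hc
  · exact h
  · rw [Finset.mem_filter] at hc
    exact lt_trans hc.2 h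

lemma psiVal_lt_of_blk_lt (τ ρ) {x y : N} (h : τ (blk P x) < τ (blk P y)) :
    psiVal P τ ρ x < psiVal P τ ρ y := by
  have h1 : psiVal P τ ρ x < offset P τ (blk P x) + (blk P x).1.card :=
    Nat.add_lt_add_left (rhoVal_lt P ρ x) _
  have h2 := offset_mono P τ h
  have h3 : offset P τ (blk P y) ≤ psiVal P τ ρ y := Nat.le_add_right _ _
  omega

lemma psiVal_lt_iff_of_blk_eq (τ ρ) {x y : N} (h : blk P x = blk P y) :
    (psiVal P τ ρ x < psiVal P τ ρ y ↔ rhoVal P ρ x < rhoVal P ρ y) := by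
  unfold psiVal
  rw [congrArg (offset P τ) h]
  omega

lemma psiVal_trichotomy (τ ρ) (x y : N) :
    psiVal P τ ρ x < psiVal P τ ρ y ↔
      (τ (blk P x) < τ (blk P y) ∨ (blk P x = blk P y ∧ rhoVal P ρ x < rhoVal P ρ y)) := by
  constructor
  · intro h
    rcases lt_trichotomy (τ (blk P x)) (τ (blk P y)) with hlt | heq | hgt
    · exact Or.inl hlt
    · have hbe : blk P x = blk P y := τ.injective heq
      exact Or.inr ⟨hbe, (psiVal_lt_iff_of_blk_eq P τ ρ hbe).1 h⟩
    · exact absurd (lt_trans h (psiVal_lt_of_blk_lt P τ ρ hgt)) (lt_irrefl _)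
  · rintro (hlt | ⟨heq, hrho⟩)
    · exact psiVal_lt_of_blk_lt P τ ρ hlt
    · exact (psiVal_lt_iff_of_blk_eq P τ ρ heq).2 hrho

lemma psiVal_injective (τ ρ) : Function.Injective (psiVal P τ ρ) := by
  intro x y h
  rcases lt_trichotomy (τ (blk P x)) (τ (blk P y)) with hlt | heq | hgt
  · exact absurd (h ▸ psiVal_lt_of_blk_lt P τ ρ hlt) (lt_irrefl _)
  · have hbe : blk P x = blk P y := τ.injective heq
    have hoff : offset P τ (blk P x) = offset P τ (blk P y) := congrArg _ hbe
    have hrho : rhoVal P ρ x = rhoVal P ρ y := by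
      unfold psiVal at h; omega
    -- recover x = y
    have hx' : x ∈ (blk P y).1 := hbe ▸ mem_blk P x
    have h1 : rhoVal P ρ x = (ρ (blk P y) ⟨x, hx'⟩ : ℕ) := rho_congr P ρ hbe x (mem_blk P x)
    have h2 : (ρ (blk P y) ⟨x, hx'⟩ : ℕ) = (ρ (blk P y) ⟨y, mem_blk P y⟩ : ℕ) := by
      rw [← h1, hrho]; rfl
    have := (ρ (blk P y)).injective (Fin.val_injective h2)
    simpa using congrArg Subtype.val this
  · exact absurd (h ▸ psiVal_lt_of_blk_lt P τ ρ hgt) (lt_irrefl _)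

/-- the concatenated permutation. -/
noncomputable def Psi (τ : PT P ≃ Fin P.parts.card)
    (ρ : (b : PT P) → ({x // x ∈ b.1} ≃ Fin b.1.card)) : N ≃ Fin (Fintype.card N) :=
  Equiv.ofBijective (fun x => (⟨psiVal P τ ρ x, psiVal_lt P τ ρ x⟩ : Fin (Fintype.card N)))
    ((Fintype.bijective_iff_injective_and_card _).2
      ⟨fun x y h => psiVal_injective P τ ρ (by simpa [Fin.mk.injEq] using h), by simp⟩)

lemma Psi_apply (τ ρ) (x : N) : (Psi P τ ρ x : ℕ) = psiVal P τ ρ x := rfl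

lemma Psi_lt_iff (τ ρ) (x y : N) :
    Psi P τ ρ x < Psi P τ ρ y ↔
      (τ (blk P x) < τ (blk P y) ∨ (blk P x = blk P y ∧ rhoVal P ρ x < rhoVal P ρ y)) := by
  rw [Fin.lt_def, Psi_apply, Psi_apply]
  exact psiVal_trichotomy P τ ρ x y



-- ===================== preds of Psi =====================

lemma preds_Psi (τ ρ) (x : N) :
    predsE (Psi P τ ρ) x =
      ((predsE τ (blk P x)).image (fun b : PT P => b.1)).biUnion id ∪
        (predsE (ρ (blk P x)) ⟨x, mem_blk P x⟩).image Subtype.val := by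
  ext j
  rw [mem_predsE, Psi_lt_iff]
  simp only [Finset.mem_union, Finset.mem_biUnion, Finset.mem_image, id]
  constructor
  · rintro (hlt | ⟨heq, hrho⟩)
    · exact Or.inl ⟨(blk P j).1, ⟨blk P j, by rw [mem_predsE]; exact hlt, rfl⟩, mem_blk P j⟩
    · right
      have hj : j ∈ (blk P x).1 := heq ▸ mem_blk P j
      refine ⟨⟨j, hj⟩, ?_, rfl⟩
      rw [mem_predsE, Fin.lt_def]
      have h1 : rhoVal P ρ j = (ρ (blk P x) ⟨j, hj⟩ : ℕ) := rho_congr P ρ heq j (mem_blk P j)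
      rw [← h1]
      exact hrho
  · rintro (⟨t, ⟨b, hb, rfl⟩, hj⟩ | ⟨⟨y, hy⟩, hmem, rfl⟩)
    · left
      rw [mem_predsE] at hb
      rwa [blk_eq_of_mem P hj]
    · right
      have heq : blk P y = blk P x := blk_eq_of_mem P hy
      refine ⟨heq, ?_⟩
      rw [mem_predsE, Fin.lt_def] at hmem
      have h1 : rhoVal P ρ y = (ρ (blk P x) ⟨y, hy⟩ : ℕ) := rho_congr P ρ heq y (mem_blk P y)
      rw [← h1] at hmem
      exact hmem

-- ===================== compatibility =====================

lemma Psi_compat (τ ρ) : Compatible P (Psi P τ ρ) := by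
  rintro a b k ⟨B', hB', haB', hbB'⟩ h1 h2
  have hba : blk P a = ⟨B', hB'⟩ := blk_eq_of_mem P haB'
  have hbb : blk P b = ⟨B', hB'⟩ := blk_eq_of_mem P hbB'
  rw [Psi_lt_iff] at h1 h2
  have hk : blk P k = (⟨B', hB'⟩ : PT P) := by
    rcases lt_trichotomy (τ (blk P k)) (τ (⟨B', hB'⟩ : PT P)) with hlt | heq | hgt
    · exfalso
      rcases h1 with hl | ⟨he, _⟩
      · rw [hba] at hl
        exact absurd (lt_trans hl hlt) (lt_irrefl _)
      · rw [← he, hba] at hlt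
        exact absurd hlt (lt_irrefl _)
    · exact τ.injective heq
    · exfalso
      rcases h2 with hl | ⟨he, _⟩
      · rw [hbb] at hl
        exact absurd (lt_trans hl hgt) (lt_irrefl _)
      · rw [he, hbb] at hgt
        exact absurd hgt (lt_irrefl _)
  refine ⟨B', hB', haB', hbB', ?_⟩
  have := mem_blk P k
  rw [hk] at this
  exact this

-- ===================== recovery (surjectivity) =====================

lemma Psi_recover {σ : N ≃ Fin (Fintype.card N)} (hσ : Compatible P σ) :
    Psi P (tauOf P σ) (rhoOf P σ) = σ := by
  apply Equiv.ext
  intro x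
  apply Fin.ext
  rw [Psi_apply]
  have hcard : (σ x : ℕ) = (predsE σ x).card := (card_predsE σ x).symm
  rw [hcard, card_eq_sum_parts P (predsE σ x)]
  classical
  have hsplit := Finset.sum_filter_add_sum_filter_not (Finset.univ : Finset (PT P))
    (fun b : PT P => b ≠ blk P x ∧ ∀ y ∈ b.1, σ y < σ x)
    (fun b : PT P => (b.1 ∩ predsE σ x).card)
  rw [← hsplit]
  unfold psiVal
  congr 1
  · -- offsets
    rw [offset]
    rw [Finset.filter_congr (q := fun b : PT P => b ≠ blk P x ∧ ∀ y ∈ b.1, σ y < σ x) (fun b _ => ?_)]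
    · apply Finset.sum_congr rfl
      intro b hb
      rw [Finset.mem_filter] at hb
      congr 1
      symm
      rw [Finset.inter_eq_left]
      intro y hy
      rw [mem_predsE]
      exact hb.2.2 y hy
    · rw [show (tauOf P σ b < tauOf P σ (blk P x)) ↔ _ from tauOf_lt_iff P σ b (blk P x),
        keyF_lt_iff P hσ x b]
  · -- rho part
    rw [Finset.sum_eq_single_of_mem (blk P x)]
    · show rhoVal P (rhoOf P σ) x = ((blk P x).1 ∩ predsE σ x).card
      have h1 : rhoVal P (rhoOf P σ) x
          = ((blk P x).1.filter (fun y => σ y < σ x)).card := rfl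
      rw [h1]
      congr 1
      ext y
      simp only [Finset.mem_filter, Finset.mem_inter, mem_predsE]
    · rw [Finset.mem_filter]
      refine ⟨Finset.mem_univ _, ?_⟩
      simp
    · intro b hb hbne
      rw [Finset.mem_filter] at hb
      have hnQ := hb.2
      have habove : ∀ y ∈ b.1, σ x < σ y := by
        rcases block_dichotomy P hσ x hbne with hbelow | habove
        · exact absurd ⟨hbne, hbelow⟩ hnQ
        · exact habove
      rw [Finset.card_eq_zero]
      rw [Finset.eq_empty_iff_forall_notMem]
      intro y hy
      rw [Finset.mem_inter, mem_predsE] at hy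
      exact absurd (lt_trans hy.2 (habove y hy.1)) (lt_irrefl _)

-- ===================== injectivity =====================

lemma Psi_inj {τ τ' : PT P ≃ Fin P.parts.card}
    {ρ ρ' : (b : PT P) → ({x // x ∈ b.1} ≃ Fin b.1.card)}
    (h : Psi P τ ρ = Psi P τ' ρ') : τ = τ' ∧ ρ = ρ' := by
  have hval : ∀ x, psiVal P τ ρ x = psiVal P τ' ρ' x := by
    intro x
    have : Psi P τ ρ x = Psi P τ' ρ' x := by rw [h]
    exact congrArg Fin.val this
  have hlt : ∀ x y, psiVal P τ ρ x < psiVal P τ ρ y ↔ psiVal P τ' ρ' x < psiVal P τ' ρ' y := by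
    intro x y
    rw [hval, hval]
  have compare : ∀ (b c : PT P), c ≠ b → (τ c < τ b ↔ τ' c < τ' b) := by
    intro b c hcb
    obtain ⟨y, hy⟩ := P.nonempty_of_mem_parts c.2
    obtain ⟨z, hz⟩ := P.nonempty_of_mem_parts b.2
    have hby : blk P y = c := blk_eq_of_mem P hy
    have hbz : blk P z = b := blk_eq_of_mem P hz
    have e1 : ∀ (τ₀ : PT P ≃ Fin P.parts.card) (ρ₀),
        (τ₀ c < τ₀ b ↔ psiVal P τ₀ ρ₀ y < psiVal P τ₀ ρ₀ z) := by
      intro τ₀ ρ₀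
      rw [psiVal_trichotomy, hby, hbz]
      constructor
      · exact Or.inl
      · rintro (hl | ⟨he, _⟩)
        · exact hl
        · exact absurd he hcb
    rw [e1 τ ρ, e1 τ' ρ', hlt]
  constructor
  · apply Equiv.ext
    intro b
    apply Fin.ext
    rw [← card_predsE τ b, ← card_predsE τ' b]
    congr 1
    ext c
    rw [mem_predsE, mem_predsE]
    by_cases hcb : c = b
    · subst hcb
      simp
    · exact compare b c hcb
  · funext b
    apply Equiv.ext
    intro xs
    apply Fin.ext
    rw [← card_predsE (ρ b) xs, ← card_predsE (ρ' b) xs]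
    congr 1
    ext ys
    rw [mem_predsE, mem_predsE]
    have hbys : blk P ys.1 = b := blk_eq_of_mem P ys.2
    have hbxs : blk P xs.1 = b := blk_eq_of_mem P xs.2
    have key : ∀ (ρ₀ : (b : PT P) → ({x // x ∈ b.1} ≃ Fin b.1.card)) (ws : {x // x ∈ b.1}),
        (ρ₀ b ws : ℕ) = rhoVal P ρ₀ ws.1 := by
      intro ρ₀ ws
      have h1 := rho_congr P ρ₀ (blk_eq_of_mem P ws.2) ws.1 (mem_blk P ws.1)
      have h2 : (⟨ws.1, ws.2⟩ : {x // x ∈ b.1}) = ws := Subtype.ext rfl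
      exact (h1.trans (congrArg (fun t => ((ρ₀ b) t : ℕ)) h2)).symm
    have e2 : ∀ (τ₀ : PT P ≃ Fin P.parts.card) (ρ₀),
        (ρ₀ b ys < ρ₀ b xs ↔ psiVal P τ₀ ρ₀ ys.1 < psiVal P τ₀ ρ₀ xs.1) := by
      intro τ₀ ρ₀
      rw [psiVal_lt_iff_of_blk_eq P τ₀ ρ₀ (hbys.trans hbxs.symm), Fin.lt_def,
        key ρ₀ ys, key ρ₀ xs]
    rw [e2 τ ρ, e2 τ' ρ', hlt]


-- ===================== cardinality and pi-splitting =====================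

lemma card_equiv_block (b : PT P) :
    Fintype.card ({x // x ∈ b.1} ≃ Fin b.1.card) = (b.1.card).factorial := by
  rw [Fintype.card_equiv (b.1.equivFin), Fintype.card_coe]

lemma card_DT :
    Fintype.card (DT P)
      = (P.parts.card).factorial * ∏ b : PT P, (b.1.card).factorial := by
  rw [Fintype.card_prod, Fintype.card_pi]
  congr 1
  · rw [Fintype.card_equiv (P.parts.equivFin), Fintype.card_coe]
  · exact Finset.prod_congr rfl (fun b _ => card_equiv_block P b)

lemma sum_pi_eval (b0 : PT P) (G : ({x // x ∈ b0.1} ≃ Fin b0.1.card) → ℝ) :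
    ∑ ρ : ((b : PT P) → ({x // x ∈ b.1} ≃ Fin b.1.card)), G (ρ b0)
      = ((∏ b ∈ Finset.univ.erase b0, (b.1.card).factorial : ℕ) : ℝ) * ∑ y, G y := by
  classical
  rw [Fintype.sum_equiv (Equiv.piSplitAt b0 (fun b : PT P => {x // x ∈ b.1} ≃ Fin b.1.card))
      (fun ρ => G (ρ b0)) (fun q => G q.1) (fun ρ => rfl)]
  rw [Fintype.sum_prod_type]
  have hconst : ∀ y : ({x // x ∈ b0.1} ≃ Fin b0.1.card),
      (∑ _z : ((j : {j : PT P // j ≠ b0}) → ({x // x ∈ (j : PT P).1} ≃ Fin (j : PT P).1.card)),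
        G y)
      = (Fintype.card ((j : {j : PT P // j ≠ b0}) →
          ({x // x ∈ (j : PT P).1} ≃ Fin (j : PT P).1.card)) : ℝ) * G y := by
    intro y
    rw [Finset.sum_const, Finset.card_univ, nsmul_eq_mul]
  rw [Finset.sum_congr rfl (fun y _ => hconst y), ← Finset.mul_sum]
  congr 2
  rw [Fintype.card_pi]
  rw [Finset.prod_congr rfl
    (fun j (_ : j ∈ (Finset.univ : Finset {j : PT P // j ≠ b0})) => card_equiv_block P (j : PT P))]
  rw [Finset.prod_subtype (Finset.univ.erase b0) (p := fun j : PT P => j ≠ b0)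
    (by simp) (fun b : PT P => (b.1.card).factorial)]

end OwenPart

namespace OwenPart
open OwenAux
variable {N : Type} [Fintype N] [DecidableEq N] (P : Finpartition (Finset.univ : Finset N))

lemma reindexR (m : ℕ) (b0 : PT P) (H : Finset (Finset N) → ℝ) :
    ∑ T ∈ (Finset.univ.erase b0).powerset,
        ((Nat.factorial T.card * Nat.factorial (m - T.card - 1) : ℕ) : ℝ)
          * H (T.image (fun b : PT P => b.1))
      = ∑ R ∈ (P.parts.erase b0.1).powerset,
          ((Nat.factorial R.card * Nat.factorial (m - R.card - 1) : ℕ) : ℝ) * H R := by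
  classical
  apply Finset.sum_bij (fun (T : Finset (PT P)) (_ : T ∈ (Finset.univ.erase b0).powerset) =>
    T.image (fun b : PT P => b.1))
  · intro T hT
    rw [Finset.mem_powerset] at hT ⊢
    intro t ht
    rw [Finset.mem_image] at ht
    obtain ⟨b, hb, rfl⟩ := ht
    have hbne : b ≠ b0 := (Finset.mem_erase.1 (hT hb)).1
    rw [Finset.mem_erase]
    exact ⟨fun hc => hbne (Subtype.ext hc), b.2⟩
  · intro T1 _ T2 _ heq
    exact Finset.image_injective Subtype.val_injective heq
  · intro R hR
    rw [Finset.mem_powerset] at hR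
    refine ⟨Finset.univ.filter (fun b : PT P => b.1 ∈ R), ?_, ?_⟩
    · rw [Finset.mem_powerset]
      intro b hb
      rw [Finset.mem_filter] at hb
      have h2 := hR hb.2
      rw [Finset.mem_erase] at h2 ⊢
      exact ⟨fun hc => h2.1 (congrArg Subtype.val hc), Finset.mem_univ b⟩
    · ext t
      simp only [Finset.mem_image, Finset.mem_filter, Finset.mem_univ, true_and]
      constructor
      · rintro ⟨b, hb, rfl⟩; exact hb
      · intro ht
        have htp : t ∈ P.parts := (Finset.mem_erase.1 (hR ht)).2
        exact ⟨⟨t, htp⟩, ht, rfl⟩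
  · intro T _
    rw [Finset.card_image_of_injective T Subtype.val_injective]

lemma reindexS (p : ℕ) (b0 : PT P) (x0 : {x // x ∈ b0.1}) (H : Finset N → ℝ) :
    ∑ S' ∈ (Finset.univ.erase x0).powerset,
        ((Nat.factorial S'.card * Nat.factorial (p - S'.card - 1) : ℕ) : ℝ)
          * H (S'.image Subtype.val)
      = ∑ S ∈ (b0.1.erase x0.1).powerset,
          ((Nat.factorial S.card * Nat.factorial (p - S.card - 1) : ℕ) : ℝ) * H S := by
  classical
  apply Finset.sum_bij (fun (S' : Finset {x // x ∈ b0.1})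
    (_ : S' ∈ (Finset.univ.erase x0).powerset) => S'.image Subtype.val)
  · intro S' hS'
    rw [Finset.mem_powerset] at hS' ⊢
    intro z hz
    rw [Finset.mem_image] at hz
    obtain ⟨y, hy, rfl⟩ := hz
    have hyne : y ≠ x0 := (Finset.mem_erase.1 (hS' hy)).1
    rw [Finset.mem_erase]
    exact ⟨fun hc => hyne (Subtype.ext hc), y.2⟩
  · intro S1 _ S2 _ heq
    exact Finset.image_injective Subtype.val_injective heq
  · intro S hS
    rw [Finset.mem_powerset] at hS
    refine ⟨Finset.univ.filter (fun y : {x // x ∈ b0.1} => y.1 ∈ S), ?_, ?_⟩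
    · rw [Finset.mem_powerset]
      intro y hy
      rw [Finset.mem_filter] at hy
      have h2 := hS hy.2
      rw [Finset.mem_erase] at h2 ⊢
      exact ⟨fun hc => h2.1 (congrArg Subtype.val hc), Finset.mem_univ y⟩
    · ext z
      simp only [Finset.mem_image, Finset.mem_filter, Finset.mem_univ, true_and]
      constructor
      · rintro ⟨y, hy, rfl⟩; exact hy
      · intro hz
        have hzb : z ∈ b0.1 := Finset.mem_of_mem_erase (hS hz)
        exact ⟨⟨z, hzb⟩, hz, rfl⟩
  · intro S' _
    rw [Finset.card_image_of_injective S' Subtype.val_injective]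

end OwenPart

open OwenAux OwenPart in
/-- For a TU-game `(N, v)` with `v ∅ = 0` and a partition `P` of `N`,
the Owen value admits the permutation formulation: for every player `i`, with block
`B = P_(i)`, `p_i = |B|` and `m = |P|`,
`∑_{R ⊆ P \ {B}} ∑_{S ⊆ B \ {i}} (|S|! (p_i-|S|-1)! |R|! (m-|R|-1)!)/(p_i! m!)
   (v (∪R ∪ S ∪ {i}) - v (∪R ∪ S))
 = (1/|Π_P(N)|) ∑_{σ ∈ Π_P(N)} (v (P_i^σ ∪ {i}) - v (P_i^σ))`. -/
theorem owen_eq_permutation_formulation {N : Type} [Fintype N] [DecidableEq N] [Nonempty N]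
    (v : Finset N → ℝ) (hv0 : v ∅ = 0)
    (P : Finpartition (Finset.univ : Finset N))
    (i : N) (B : Finset N) (hB : B ∈ P.parts) (hiB : i ∈ B) :
    ∑ R ∈ (P.parts.erase B).powerset, ∑ S ∈ (B.erase i).powerset,
        ((Nat.factorial S.card * Nat.factorial (B.card - S.card - 1) *
          Nat.factorial R.card * Nat.factorial (P.parts.card - R.card - 1) : ℝ) /
          ((Nat.factorial B.card : ℝ) * (Nat.factorial P.parts.card : ℝ))) *
        (v (insert i (R.biUnion id ∪ S)) - v (R.biUnion id ∪ S))
      = (1 / ((compatPerms P).card : ℝ)) *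
          ∑ σ ∈ compatPerms P, (v (insert i (preds σ i)) - v (preds σ i)) := by
  classical
  have hPB : B = (OwenPart.blk P i).1 := (P.part_eq_of_mem hB hiB).symm
  subst hPB
  have hmemi : i ∈ (blk P i).1 := mem_blk P i
  -- step 1 : sum over compatible permutations = sum over structures
  have hsum1 : ∑ σ ∈ compatPerms P, (v (insert i (preds σ i)) - v (preds σ i))
      = ∑ tr : DT P, (v (insert i (predsE (Psi P tr.1 tr.2) i))
          - v (predsE (Psi P tr.1 tr.2) i)) := by
    symm
    apply Finset.sum_bij (fun (tr : DT P) (_ : tr ∈ Finset.univ) => Psi P tr.1 tr.2)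
    · intro tr _
      rw [compatPerms, Finset.mem_filter]
      exact ⟨Finset.mem_univ _, Psi_compat P tr.1 tr.2⟩
    · intro t1 _ t2 _ h
      obtain ⟨h1, h2⟩ := Psi_inj P h
      exact Prod.ext h1 h2
    · intro σ hσ
      rw [compatPerms, Finset.mem_filter] at hσ
      exact ⟨(tauOf P σ, rhoOf P σ), Finset.mem_univ _, Psi_recover P hσ.2⟩
    · intro tr _
      rfl
  -- step 2 : cardinality of the compatible permutations
  have hb2 : (Finset.univ : Finset (DT P)).card = (compatPerms P).card := by
    apply Finset.card_bij (fun (tr : DT P) (_ : tr ∈ Finset.univ) => Psi P tr.1 tr.2)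
    · intro tr _
      rw [compatPerms, Finset.mem_filter]
      exact ⟨Finset.mem_univ _, Psi_compat P tr.1 tr.2⟩
    · intro t1 _ t2 _ h
      obtain ⟨h1, h2⟩ := Psi_inj P h
      exact Prod.ext h1 h2
    · intro σ hσ
      rw [compatPerms, Finset.mem_filter] at hσ
      exact ⟨(tauOf P σ, rhoOf P σ), Finset.mem_univ _, Psi_recover P hσ.2⟩
  have hcard1 : (compatPerms P).card
      = (P.parts.card).factorial * ∏ b : PT P, (b.1.card).factorial := by
    rw [← hb2, Finset.card_univ, card_DT P]
  have hprodsplit : (∏ b : PT P, (b.1.card).factorial)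
      = ((blk P i).1.card).factorial
          * ∏ b ∈ Finset.univ.erase (blk P i), (b.1.card).factorial :=
    (Finset.mul_prod_erase Finset.univ (fun b : PT P => (b.1.card).factorial)
      (Finset.mem_univ (blk P i))).symm
  -- main chain
  have hMAIN : ∑ σ ∈ compatPerms P, (v (insert i (preds σ i)) - v (preds σ i))
      = ((∏ b ∈ Finset.univ.erase (blk P i), (b.1.card).factorial : ℕ) : ℝ)
          * ∑ R ∈ (P.parts.erase (blk P i).1).powerset,
          ((Nat.factorial R.card * Nat.factorial (P.parts.card - R.card - 1) : ℕ) : ℝ) *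
            ∑ S ∈ ((blk P i).1.erase i).powerset,
              ((Nat.factorial S.card * Nat.factorial ((blk P i).1.card - S.card - 1) : ℕ) : ℝ) *
                (v (insert i (R.biUnion id ∪ S)) - v (R.biUnion id ∪ S)) := by
    rw [hsum1]
    have h2 : ∑ tr : DT P, (v (insert i (predsE (Psi P tr.1 tr.2) i))
          - v (predsE (Psi P tr.1 tr.2) i))
        = ∑ τ : PT P ≃ Fin P.parts.card,
            ∑ ρ : ((b : PT P) → ({x // x ∈ b.1} ≃ Fin b.1.card)),
            (v (insert i (((predsE τ (blk P i)).image (fun b : PT P => b.1)).biUnion id ∪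
                (predsE (ρ (blk P i)) ⟨i, mem_blk P i⟩).image Subtype.val))
              - v (((predsE τ (blk P i)).image (fun b : PT P => b.1)).biUnion id ∪
                (predsE (ρ (blk P i)) ⟨i, mem_blk P i⟩).image Subtype.val)) := by
      rw [Fintype.sum_prod_type]
      apply Finset.sum_congr rfl
      intro τ _
      apply Finset.sum_congr rfl
      intro ρ _
      rw [preds_Psi]
    rw [h2]
    have h3 : ∀ τ : PT P ≃ Fin P.parts.card,
        (∑ ρ : ((b : PT P) → ({x // x ∈ b.1} ≃ Fin b.1.card)),
            (v (insert i (((predsE τ (blk P i)).image (fun b : PT P => b.1)).biUnion id ∪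
                (predsE (ρ (blk P i)) ⟨i, mem_blk P i⟩).image Subtype.val))
              - v (((predsE τ (blk P i)).image (fun b : PT P => b.1)).biUnion id ∪
                (predsE (ρ (blk P i)) ⟨i, mem_blk P i⟩).image Subtype.val)))
        = ((∏ b ∈ Finset.univ.erase (blk P i), (b.1.card).factorial : ℕ) : ℝ)
            * ∑ y : ({x // x ∈ (blk P i).1} ≃ Fin (blk P i).1.card),
            (v (insert i (((predsE τ (blk P i)).image (fun b : PT P => b.1)).biUnion id ∪
                (predsE y ⟨i, mem_blk P i⟩).image Subtype.val))
              - v (((predsE τ (blk P i)).image (fun b : PT P => b.1)).biUnion id ∪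
                (predsE y ⟨i, mem_blk P i⟩).image Subtype.val)) := by
      intro τ
      exact sum_pi_eval P (blk P i)
        (fun y => v (insert i (((predsE τ (blk P i)).image (fun b : PT P => b.1)).biUnion id ∪
                (predsE y ⟨i, mem_blk P i⟩).image Subtype.val))
              - v (((predsE τ (blk P i)).image (fun b : PT P => b.1)).biUnion id ∪
                (predsE y ⟨i, mem_blk P i⟩).image Subtype.val))
    rw [Finset.sum_congr rfl (fun τ _ => h3 τ), ← Finset.mul_sum]
    congr 1
    have hnPT : Fintype.card (PT P) = P.parts.card := Fintype.card_coe _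
    rw [sum_predsE hnPT (blk P i)
      (fun T => ∑ y : ({x // x ∈ (blk P i).1} ≃ Fin (blk P i).1.card),
            (v (insert i ((T.image (fun b : PT P => b.1)).biUnion id ∪
                (predsE y ⟨i, mem_blk P i⟩).image Subtype.val))
              - v ((T.image (fun b : PT P => b.1)).biUnion id ∪
                (predsE y ⟨i, mem_blk P i⟩).image Subtype.val)))]
    have hnB : Fintype.card {x // x ∈ (blk P i).1} = (blk P i).1.card := Fintype.card_coe _
    have h4 : ∀ T : Finset (PT P),
        (∑ y : ({x // x ∈ (blk P i).1} ≃ Fin (blk P i).1.card),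
            (v (insert i ((T.image (fun b : PT P => b.1)).biUnion id ∪
                (predsE y ⟨i, mem_blk P i⟩).image Subtype.val))
              - v ((T.image (fun b : PT P => b.1)).biUnion id ∪
                (predsE y ⟨i, mem_blk P i⟩).image Subtype.val)))
        = ∑ W ∈ (Finset.univ.erase (⟨i, mem_blk P i⟩ : {x // x ∈ (blk P i).1})).powerset,
            ((Nat.factorial W.card * Nat.factorial ((blk P i).1.card - W.card - 1) : ℕ) : ℝ) *
            (v (insert i ((T.image (fun b : PT P => b.1)).biUnion id ∪ W.image Subtype.val))
              - v ((T.image (fun b : PT P => b.1)).biUnion id ∪ W.image Subtype.val)) := by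
      intro T
      exact sum_predsE hnB (⟨i, mem_blk P i⟩ : {x // x ∈ (blk P i).1})
        (fun W => v (insert i ((T.image (fun b : PT P => b.1)).biUnion id ∪ W.image Subtype.val))
              - v ((T.image (fun b : PT P => b.1)).biUnion id ∪ W.image Subtype.val))
    rw [Finset.sum_congr rfl (fun T _ => by rw [h4 T])]
    have h5 : ∀ T : Finset (PT P),
        (∑ W ∈ (Finset.univ.erase (⟨i, mem_blk P i⟩ : {x // x ∈ (blk P i).1})).powerset,
            ((Nat.factorial W.card * Nat.factorial ((blk P i).1.card - W.card - 1) : ℕ) : ℝ) *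
            (v (insert i ((T.image (fun b : PT P => b.1)).biUnion id ∪ W.image Subtype.val))
              - v ((T.image (fun b : PT P => b.1)).biUnion id ∪ W.image Subtype.val)))
        = ∑ S ∈ ((blk P i).1.erase i).powerset,
            ((Nat.factorial S.card * Nat.factorial ((blk P i).1.card - S.card - 1) : ℕ) : ℝ) *
            (v (insert i ((T.image (fun b : PT P => b.1)).biUnion id ∪ S))
              - v ((T.image (fun b : PT P => b.1)).biUnion id ∪ S)) := by
      intro T
      exact reindexS P (blk P i).1.card (blk P i) (⟨i, mem_blk P i⟩ : {x // x ∈ (blk P i).1})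
        (fun W => v (insert i ((T.image (fun b : PT P => b.1)).biUnion id ∪ W))
          - v ((T.image (fun b : PT P => b.1)).biUnion id ∪ W))
    rw [Finset.sum_congr rfl (fun T _ => by rw [h5 T])]
    exact reindexR P P.parts.card (blk P i)
      (fun R => ∑ S ∈ ((blk P i).1.erase i).powerset,
          ((Nat.factorial S.card * Nat.factorial ((blk P i).1.card - S.card - 1) : ℕ) : ℝ) *
          (v (insert i (R.biUnion id ∪ S)) - v (R.biUnion id ∪ S)))
  -- final algebra
  rw [hMAIN]
  conv_rhs => rw [Finset.mul_sum, Finset.mul_sum]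
  apply Finset.sum_congr rfl
  intro R hR
  conv_rhs => rw [Finset.mul_sum, Finset.mul_sum, Finset.mul_sum]
  apply Finset.sum_congr rfl
  intro S hS
  -- scalar identity
  have hQpos : 0 < ∏ b ∈ Finset.univ.erase (blk P i), (b.1.card).factorial :=
    Finset.prod_pos (fun b _ => Nat.factorial_pos _)
  have hQne : ((∏ b ∈ Finset.univ.erase (blk P i), (b.1.card).factorial : ℕ) : ℝ) ≠ 0 := by
    positivity
  have hppos := Nat.factorial_pos (blk P i).1.card
  have hpne : (((blk P i).1.card.factorial : ℕ) : ℝ) ≠ 0 := by positivity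
  have hmpos := Nat.factorial_pos P.parts.card
  have hmne : ((P.parts.card.factorial : ℕ) : ℝ) ≠ 0 := by positivity
  have hcardR : (((compatPerms P).card : ℕ) : ℝ)
      = ((P.parts.card.factorial : ℕ) : ℝ) * ((((blk P i).1.card.factorial : ℕ) : ℝ)
          * ((∏ b ∈ Finset.univ.erase (blk P i), (b.1.card).factorial : ℕ) : ℝ)) := by
    rw [hcard1, hprodsplit]
    push_cast
    ring
  rw [hcardR]
  push_cast
  field_simp
end

section
/- Let (N,c,E,P) be a bankruptcy problem with a priori unions, with partition P = {P_1,…,P_m}, and let v be the associated bankruptcy game, v(S) = max{0, E − Σ_{j∈N∖S} c_j}. For i ∈ N let P_(i) denote the block of P containing i and p_i = |P_(i)|. Then the Owen value of the bankruptcy game equals the RA-random arrival rule with unions: for every i ∈ N, Σ_{R ⊆ P∖{P_(i)}} Σ_{S ⊆ P_(i)∖{i}} [ |S|!·(p_i−|S|−1)!·|R|!·(m−|R|−1)! / (p_i!·m!) ] · ( v(∪_{P_l∈R} P_l ∪ S ∪ {i}) − v(∪_{P_l∈R} P_l ∪ S) ) = (1/|Π_P(N)|) Σ_{σ∈Π_P(N)}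 min{ c_i, max{0, E − Σ_{j∈P_i^σ} c_j} }. -/
open Finset
open scoped Classical

set_option linter.unusedSectionVars false

/-- For any equiv to `Fin b`, the value of `e x` equals the number of elements mapped below it. -/
lemma card_lt_rank {α : Type} [Fintype α] [DecidableEq α] {b : ℕ} (e : α ≃ Fin b) (x : α) :
    (univ.filter (fun y => e y < e x)).card = (e x : ℕ) := by
  have h : (univ.filter (fun y => e y < e x)).image e = Finset.Iio (e x) := by
    ext k
    simp only [mem_image, mem_filter, mem_univ, true_and, mem_Iio]
    constructor
    · rintro ⟨y, hy, rfl⟩; exact hy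
    · intro hk; exact ⟨e.symm k, by simpa using hk, by simp⟩
  have := congrArg Finset.card h
  rwa [Finset.card_image_of_injective _ e.injective, Fin.card_Iio] at this

lemma rank_equiv {β γ : Type} [Fintype β] [DecidableEq β] [LinearOrder γ] {b : ℕ}
    (hb : Fintype.card β = b) (f : β → γ) (hf : Function.Injective f) :
    ∃ e : β ≃ Fin b, ∀ y z, e y < e z ↔ f y < f z := by
  set r : β → ℕ := fun y => (univ.filter (fun z => f z < f y)).card with hr
  have hmono : ∀ {y z}, f y < f z → r y < r z := by
    intro y z hyz
    apply Finset.card_lt_card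
    constructor
    · intro w hw
      simp only [mem_filter, mem_univ, true_and] at hw ⊢
      exact hw.trans hyz
    · intro hsub
      have : y ∈ univ.filter (fun w => f w < f z) := by simp [hyz]
      have := hsub this
      simp at this
  have hlt : ∀ y, r y < b := by
    intro y
    rw [← hb]
    have : univ.filter (fun z => f z < f y) ⊆ univ.erase y := by
      intro w hw
      simp only [mem_filter, mem_univ, true_and] at hw
      simp only [mem_erase, mem_univ, and_true]
      rintro rfl; exact lt_irrefl _ hw
    calc (univ.filter (fun z => f z < f y)).card ≤ (univ.erase y).card := Finset.card_le_card this
      _ < univ.card := Finset.card_erase_lt_of_mem (mem_univ y)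
      _ = Fintype.card β := rfl
  have hinj : Function.Injective (fun y => (⟨r y, hlt y⟩ : Fin b)) := by
    intro y z h
    by_contra hne
    have hfne : f y ≠ f z := fun h' => hne (hf h')
    rcases hfne.lt_or_gt with h'|h'
    · exact absurd (congrArg Fin.val h) (Nat.ne_of_lt (hmono h'))
    · exact absurd (congrArg Fin.val h).symm (Nat.ne_of_lt (hmono h'))
  have hbij : Function.Bijective (fun y => (⟨r y, hlt y⟩ : Fin b)) :=
    (Fintype.bijective_iff_injective_and_card _).2 ⟨hinj, by simp [hb]⟩
  refine ⟨Equiv.ofBijective _ hbij, ?_⟩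
  intro y z
  constructor
  · intro h
    by_contra hnot
    rcases eq_or_lt_of_le (not_lt.1 hnot) with h'|h'
    · have : y = z := hf h'.symm; subst this; exact lt_irrefl _ h
    · have := hmono h'
      simp only [Equiv.ofBijective_apply, Fin.lt_def] at h
      omega
  · intro h
    simpa [Equiv.ofBijective_apply, Fin.lt_def] using hmono h

lemma card_filter_subtype {α : Type} [DecidableEq α] (s : Finset α) (p : α → Prop) [DecidablePred p] :
    ((univ : Finset {x // x ∈ s}).filter (fun y => p y.1)).card = (s.filter p).card := by
  apply Finset.card_bij (fun y _ => y.1)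
  · intro a ha; simp only [mem_filter, mem_univ, true_and] at ha
    simp [a.2, ha]
  · intro a ha b hb h; exact Subtype.ext h
  · intro b hb
    simp only [mem_filter] at hb
    exact ⟨⟨b, hb.1⟩, by simp [hb.2], rfl⟩

lemma real_median (a b : ℝ) (ha : 0 ≤ a) :
    max 0 b - max 0 (b - a) = min a (max 0 b) := by
  rcases le_total b 0 with h|h <;> rcases le_total (b - a) 0 with h'|h' <;>
    rcases le_total a b with h''|h'' <;>
    simp [max_eq_left, max_eq_right, min_eq_left, min_eq_right, *] <;> linarith

lemma card_equiv_fin {α : Type} [Fintype α] [DecidableEq α] {b : ℕ} (hb : Fintype.card α = b) :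
    Fintype.card (α ≃ Fin b) = Nat.factorial b := by
  rw [Fintype.card_equiv (Fintype.equivFinOfCardEq hb), hb]

section fiber

variable {α : Type} [Fintype α] [DecidableEq α] (x : α) (T : Finset α)

private def Ufs : Finset α := (insert x T)ᶜ

private noncomputable def glueVal (f : {z // z ∈ T} ≃ Fin T.card)
    (g : {z // z ∈ Ufs x T} ≃ Fin (Fintype.card α - T.card - 1)) (y : α) : ℕ :=
  if hy : y ∈ T then (f ⟨y, hy⟩ : ℕ)
  else if hy' : y ∈ Ufs x T then T.card + 1 + (g ⟨y, hy'⟩ : ℕ)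
  else T.card

variable {x T}

private lemma memU_iff {y : α} : y ∈ Ufs x T ↔ (y ≠ x ∧ y ∉ T) := by
  simp only [Ufs, Finset.mem_compl, Finset.mem_insert]; tauto

private lemma cases3 (y : α) : y = x ∨ y ∈ T ∨ y ∈ Ufs x T := by
  by_cases h1 : y ∈ T
  · exact Or.inr (Or.inl h1)
  · by_cases h2 : y = x
    · exact Or.inl h2
    · exact Or.inr (Or.inr (memU_iff.2 ⟨h2, h1⟩))

private lemma cardU (hx : x ∉ T) : (Ufs x T).card = Fintype.card α - T.card - 1 := by
  rw [Ufs, Finset.card_compl, Finset.card_insert_of_notMem hx]; omega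

private lemma htn (hx : x ∉ T) : T.card + 1 ≤ Fintype.card α := by
  have : (insert x T).card ≤ (univ : Finset α).card := Finset.card_le_card (subset_univ _)
  rw [Finset.card_insert_of_notMem hx] at this
  simpa using this

private lemma glueVal_memT (f g) {y : α} (hy : y ∈ T) :
    glueVal x T f g y = (f ⟨y, hy⟩ : ℕ) := dif_pos hy

private lemma glueVal_memU (f g) {y : α} (hy' : y ∈ Ufs x T) :
    glueVal x T f g y = T.card + 1 + (g ⟨y, hy'⟩ : ℕ) := by
  have hy : y ∉ T := (memU_iff.1 hy').2
  rw [glueVal, dif_neg hy, dif_pos hy']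

private lemma glueVal_x (f g) (hx : x ∉ T) : glueVal x T f g x = T.card := by
  have h1 : x ∉ Ufs x T := fun h => (memU_iff.1 h).1 rfl
  rw [glueVal, dif_neg hx, dif_neg h1]

private lemma glueVal_lt (f g) (hx : x ∉ T) (y : α) : glueVal x T f g y < Fintype.card α := by
  have h1 := htn hx
  rcases cases3 (T := T) (x := x) y with rfl|hy|hy
  · rw [glueVal_x f g hx]; omega
  · rw [glueVal_memT f g hy]; have := (f ⟨y, hy⟩).2; omega
  · rw [glueVal_memU f g hy]; have := (g ⟨y, hy⟩).2; omega

private lemma glueVal_inj (f g) (hx : x ∉ T) : Function.Injective (glueVal x T f g) := by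
  have h1 := htn hx
  intro y z h
  rcases cases3 (T := T) (x := x) y with h0|hy|hy
  · rw [h0] at h ⊢
    rw [glueVal_x f g hx] at h
    rcases cases3 (T := T) (x := x) z with h0'|hz|hz
    · rw [h0']
    · rw [glueVal_memT f g hz] at h
      have := (f ⟨z, hz⟩).2; omega
    · rw [glueVal_memU f g hz] at h; omega
  · rw [glueVal_memT f g hy] at h
    rcases cases3 (T := T) (x := x) z with h0'|hz|hz
    · rw [h0'] at h ⊢
      rw [glueVal_x f g hx] at h
      have := (f ⟨y, hy⟩).2; omega
    · rw [glueVal_memT f g hz] at h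
      exact Subtype.ext_iff.1 (f.injective (Fin.ext h))
    · rw [glueVal_memU f g hz] at h
      have := (f ⟨y, hy⟩).2; omega
  · rw [glueVal_memU f g hy] at h
    rcases cases3 (T := T) (x := x) z with h0'|hz|hz
    · rw [h0'] at h ⊢
      rw [glueVal_x f g hx] at h; omega
    · rw [glueVal_memT f g hz] at h
      have := (f ⟨z, hz⟩).2; omega
    · rw [glueVal_memU f g hz] at h
      have h2 : (g ⟨y, hy⟩ : ℕ) = (g ⟨z, hz⟩ : ℕ) := by omega
      exact Subtype.ext_iff.1 (g.injective (Fin.ext h2))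

private noncomputable def glue (hx : x ∉ T) (f : {z // z ∈ T} ≃ Fin T.card)
    (g : {z // z ∈ Ufs x T} ≃ Fin (Fintype.card α - T.card - 1)) :
    α ≃ Fin (Fintype.card α) :=
  Equiv.ofBijective (fun y => ⟨glueVal x T f g y, glueVal_lt f g hx y⟩)
    ((Fintype.bijective_iff_injective_and_card _).2
      ⟨fun y z h => glueVal_inj f g hx (by simpa using congrArg Fin.val h), by simp⟩)

private lemma glue_val (hx : x ∉ T) (f g) (y : α) :
    ((glue hx f g) y : ℕ) = glueVal x T f g y := rfl

private lemma glue_prop (hx : x ∉ T) (f g) (y : α) :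
    glue hx f g y < glue hx f g x ↔ y ∈ T := by
  rw [Fin.lt_def, glue_val, glue_val, glueVal_x f g hx]
  rcases cases3 (T := T) (x := x) y with h0|hy|hy
  · rw [h0, glueVal_x f g hx]
    exact iff_of_false (lt_irrefl _) hx
  · rw [glueVal_memT f g hy]
    exact iff_of_true (f ⟨y, hy⟩).2 hy
  · rw [glueVal_memU f g hy]
    exact iff_of_false (by omega) (memU_iff.1 hy).2

variable (x T)

private lemma card_fiber_aux (hx : x ∉ T) :
    (univ.filter (fun e : α ≃ Fin (Fintype.card α) => ∀ y, (e y < e x ↔ y ∈ T))).card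
      = Fintype.card (({z // z ∈ T} ≃ Fin T.card) ×
          ({z // z ∈ Ufs x T} ≃ Fin (Fintype.card α - T.card - 1))) := by
  have hex : ∀ e : α ≃ Fin (Fintype.card α), (∀ y, (e y < e x ↔ y ∈ T)) →
      (e x : ℕ) = T.card := by
    intro e he
    rw [← card_lt_rank e x]
    congr 1; ext y; simp [he y]
  have hmemT : ∀ (e : α ≃ Fin (Fintype.card α)), (∀ y, (e y < e x ↔ y ∈ T)) →
      ∀ y : {z // z ∈ T}, (e y.1 : ℕ) < T.card := by
    intro e he y
    have hlt := (he y.1).2 y.2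
    have := hex e he
    rw [Fin.lt_def] at hlt; omega
  have hmemU : ∀ (e : α ≃ Fin (Fintype.card α)), (∀ y, (e y < e x ↔ y ∈ T)) →
      ∀ y : {z // z ∈ Ufs x T}, T.card < (e y.1 : ℕ) := by
    intro e he y
    obtain ⟨hyx, hyT⟩ := memU_iff.1 y.2
    have h1 : ¬ ((e y.1 : ℕ) < (e x : ℕ)) := by
      intro h; exact hyT ((he y.1).1 (Fin.lt_def.2 h))
    have h2 : (e y.1 : ℕ) ≠ (e x : ℕ) := fun h => hyx (e.injective (Fin.ext h))
    have := hex e he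
    omega
  rw [← Finset.card_univ]
  apply Finset.card_bij (fun (e : α ≃ Fin (Fintype.card α))
      (he : e ∈ univ.filter (fun e : α ≃ Fin (Fintype.card α) => ∀ y, (e y < e x ↔ y ∈ T))) =>
    (⟨Equiv.ofBijective
        (fun y : {z // z ∈ T} =>
          (⟨(e y.1 : ℕ), hmemT e (by simpa using he) y⟩ : Fin T.card))
        ((Fintype.bijective_iff_injective_and_card _).2
          ⟨fun y z h => Subtype.ext (e.injective (Fin.ext
            (by simpa using congrArg Fin.val h))), by simp⟩),
      Equiv.ofBijective
        (fun y : {z // z ∈ Ufs x T} =>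
          (⟨(e y.1 : ℕ) - T.card - 1, by
            have h1 := hmemU e (by simpa using he) y
            have h2 := (e y.1).2
            omega⟩ : Fin (Fintype.card α - T.card - 1)))
        ((Fintype.bijective_iff_injective_and_card _).2
          ⟨fun y z h => by
            have h1 := hmemU e (by simpa using he) y
            have h2 := hmemU e (by simpa using he) z
            have h3 : (e y.1 : ℕ) - T.card - 1 = (e z.1 : ℕ) - T.card - 1 := by
              simpa using congrArg Fin.val h
            exact Subtype.ext (e.injective (Fin.ext (by omega))),
           by simp [Fintype.card_coe, cardU hx]⟩)⟩ :
      ({z // z ∈ T} ≃ Fin T.card) × ({z // z ∈ Ufs x T} ≃ Fin (Fintype.card α - T.card - 1))))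
  · intro a ha; exact mem_univ _
  · -- injectivity
    intro e₁ h₁ e₂ h₂ heq
    simp only [mem_filter, mem_univ, true_and] at h₁ h₂
    rw [Prod.mk.injEq] at heq
    obtain ⟨hf, hg⟩ := heq
    apply Equiv.ext
    intro y
    rcases cases3 (T := T) (x := x) y with h0|hy|hy
    · rw [h0]
      exact Fin.ext ((hex e₁ h₁).trans (hex e₂ h₂).symm)
    · have := congrArg (fun q => (q ⟨y, hy⟩ : ℕ)) hf
      simp only [Equiv.ofBijective_apply] at this
      exact Fin.ext this
    · have h5 := congrArg (fun q => (q ⟨y, hy⟩ : ℕ)) hg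
      simp only [Equiv.ofBijective_apply] at h5
      have h6 : (e₁ y : ℕ) - T.card - 1 = (e₂ y : ℕ) - T.card - 1 := h5
      have m1 : T.card < (e₁ y : ℕ) := hmemU e₁ h₁ ⟨y, hy⟩
      have m2 : T.card < (e₂ y : ℕ) := hmemU e₂ h₂ ⟨y, hy⟩
      exact Fin.ext (by omega)
  · -- surjectivity
    rintro ⟨f, g⟩ -
    refine ⟨glue hx f g, by simpa using glue_prop hx f g, ?_⟩
    rw [Prod.mk.injEq]
    constructor
    · apply Equiv.ext
      intro y
      apply Fin.ext
      simp only [Equiv.ofBijective_apply]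
      rw [glue_val hx f g, glueVal_memT f g y.2]
    · apply Equiv.ext
      intro y
      apply Fin.ext
      simp only [Equiv.ofBijective_apply]
      rw [glue_val hx f g, glueVal_memU f g y.2]
      simp only [Subtype.coe_eta]
      omega

lemma card_fiber {α : Type} [Fintype α] [DecidableEq α] {b : ℕ} (hb : Fintype.card α = b)
    (x : α) (T : Finset α) (hx : x ∉ T) :
    (univ.filter (fun e : α ≃ Fin b => ∀ y, (e y < e x ↔ y ∈ T))).card
      = Nat.factorial T.card * Nat.factorial (b - T.card - 1) := by
  subst hb
  rw [card_fiber_aux x T hx, Fintype.card_prod,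
    card_equiv_fin (by simp), card_equiv_fin (by simp [Fintype.card_coe, cardU hx])]

end fiber


section psi

variable {N : Type} [Fintype N] [DecidableEq N] (P : Finpartition (Finset.univ : Finset N))

private def blk (j : N) : {C // C ∈ P.parts} := ⟨P.part j, P.part_mem.2 (mem_univ j)⟩

private lemma mem_blk (j : N) : j ∈ (blk P j).1 := P.mem_part (mem_univ j)

private def offsetP (π : {C // C ∈ P.parts} ≃ Fin P.parts.card) (C : {C // C ∈ P.parts}) : ℕ :=
  ∑ D ∈ univ.filter (fun D : {C // C ∈ P.parts} => π D < π C), D.1.card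

private noncomputable def psiVal (π : {C // C ∈ P.parts} ≃ Fin P.parts.card)
    (ρ : (C : {C // C ∈ P.parts}) → ({y // y ∈ C.1} ≃ Fin C.1.card)) (j : N) : ℕ :=
  offsetP P π (blk P j) + (ρ (blk P j) ⟨j, mem_blk P j⟩ : ℕ)

variable {P}

private lemma sum_parts_card :
    ∑ D : {C // C ∈ P.parts}, D.1.card = Fintype.card N := by
  rw [Finset.sum_coe_sort P.parts (fun D => D.card), P.sum_card_parts]
  simp

private lemma offsetP_add_card (π) (C : {C // C ∈ P.parts}) :
    offsetP P π C + C.1.card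
      = ∑ D ∈ univ.filter (fun D : {C // C ∈ P.parts} => π D ≤ π C), D.1.card := by
  have h : univ.filter (fun D : {C // C ∈ P.parts} => π D ≤ π C)
      = insert C (univ.filter (fun D : {C // C ∈ P.parts} => π D < π C)) := by
    ext D
    simp only [mem_filter, mem_univ, true_and, mem_insert]
    constructor
    · intro h
      rcases eq_or_lt_of_le h with h'|h'
      · exact Or.inl (π.injective (Fin.ext (congrArg Fin.val h')))
      · exact Or.inr h'
    · rintro (rfl|h)
      · exact le_refl _
      · exact le_of_lt h
  rw [h, Finset.sum_insert (by simp), add_comm]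
  rfl

private lemma psiVal_eq_of_mem (π ρ) {C : {C // C ∈ P.parts}} {j : N} (hj : j ∈ C.1) :
    psiVal P π ρ j = offsetP P π C + (ρ C ⟨j, hj⟩ : ℕ) := by
  have h : blk P j = C := Subtype.ext (P.part_eq_of_mem C.2 hj)
  subst h
  rfl

private lemma offsetP_le_of_lt (π) {C C' : {C // C ∈ P.parts}} (h : π C < π C') :
    offsetP P π C + C.1.card ≤ offsetP P π C' := by
  rw [offsetP_add_card]
  apply Finset.sum_le_sum_of_subset
  intro D hD
  simp only [mem_filter, mem_univ, true_and] at hD ⊢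
  exact lt_of_le_of_lt hD h

private lemma psiVal_lt (π ρ) (j : N) : psiVal P π ρ j < Fintype.card N := by
  have h1 : psiVal P π ρ j < offsetP P π (blk P j) + (blk P j).1.card := by
    rw [psiVal]
    have := (ρ (blk P j) ⟨j, mem_blk P j⟩).2
    omega
  apply lt_of_lt_of_le h1
  rw [offsetP_add_card, ← sum_parts_card]
  exact Finset.sum_le_sum_of_subset (fun D _ => mem_univ D)

private lemma psiVal_block_lt (π ρ) {j k : N} (h : π (blk P j) < π (blk P k)) :
    psiVal P π ρ j < psiVal P π ρ k := by
  have h1 : psiVal P π ρ j < offsetP P π (blk P j) + (blk P j).1.card := by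
    rw [psiVal]
    have := (ρ (blk P j) ⟨j, mem_blk P j⟩).2
    omega
  have h2 := offsetP_le_of_lt π h
  have h3 : offsetP P π (blk P k) ≤ psiVal P π ρ k := Nat.le_add_right _ _
  omega

private lemma psiVal_same_block (π ρ) {C : {C // C ∈ P.parts}} {j k : N}
    (hj : j ∈ C.1) (hk : k ∈ C.1) :
    psiVal P π ρ j < psiVal P π ρ k ↔ ρ C ⟨j, hj⟩ < ρ C ⟨k, hk⟩ := by
  rw [psiVal_eq_of_mem π ρ hj, psiVal_eq_of_mem π ρ hk, Fin.lt_def]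
  omega

private lemma psiVal_inj (π ρ) : Function.Injective (psiVal P π ρ) := by
  intro j k h
  rcases lt_trichotomy (π (blk P j)) (π (blk P k)) with h'|h'|h'
  · exact absurd h (Nat.ne_of_lt (psiVal_block_lt π ρ h'))
  · have hC : blk P j = blk P k := π.injective (Fin.ext (congrArg Fin.val h'))
    have hk : k ∈ (blk P j).1 := hC ▸ mem_blk P k
    rw [psiVal_eq_of_mem π ρ (mem_blk P j), psiVal_eq_of_mem π ρ hk] at h
    have h2 : ρ (blk P j) ⟨j, mem_blk P j⟩ = ρ (blk P j) ⟨k, hk⟩ := Fin.ext (by omega)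
    exact Subtype.ext_iff.1 ((ρ (blk P j)).injective h2)
  · exact absurd h.symm (Nat.ne_of_lt (psiVal_block_lt π ρ h'))

variable (P)

private noncomputable def Psi (π : {C // C ∈ P.parts} ≃ Fin P.parts.card)
    (ρ : (C : {C // C ∈ P.parts}) → ({y // y ∈ C.1} ≃ Fin C.1.card)) :
    N ≃ Fin (Fintype.card N) :=
  Equiv.ofBijective (fun j => ⟨psiVal P π ρ j, psiVal_lt π ρ j⟩)
    ((Fintype.bijective_iff_injective_and_card _).2
      ⟨fun j k h => psiVal_inj π ρ (by simpa using congrArg Fin.val h), by simp⟩)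

private lemma Psi_val (π ρ) (j : N) : ((Psi P π ρ) j : ℕ) = psiVal P π ρ j := rfl

end psi

section psi2

variable {N : Type} [Fintype N] [DecidableEq N] {P : Finpartition (Finset.univ : Finset N)}

private lemma Psi_compatible (π ρ) : Compatible P (Psi P π ρ) := by
  intro i j k hij h1 h2
  obtain ⟨B0, hB0, hi, hj⟩ := hij
  rw [Fin.lt_def, Psi_val, Psi_val] at h1 h2
  set C0 : {C // C ∈ P.parts} := ⟨B0, hB0⟩ with hC0
  have hbi : blk P i = C0 := Subtype.ext (P.part_eq_of_mem hB0 hi)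
  have hbj : blk P j = C0 := Subtype.ext (P.part_eq_of_mem hB0 hj)
  have hk : k ∈ B0 := by
    rcases lt_trichotomy (π (blk P k)) (π C0) with h'|h'|h'
    · exact absurd (psiVal_block_lt π ρ
        (show π (blk P k) < π (blk P i) by rw [hbi]; exact h')) (by omega)
    · have h5 : blk P k = C0 := π.injective (Fin.ext (congrArg Fin.val h'))
      have h6 := mem_blk P k
      rw [h5] at h6
      exact h6
    · exact absurd (psiVal_block_lt π ρ
        (show π (blk P j) < π (blk P k) by rw [hbj]; exact h')) (by omega)
  exact ⟨B0, hB0, hi, hj, hk⟩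

private lemma sep {σ : N ≃ Fin (Fintype.card N)} (hσ : Compatible P σ) {C D : Finset N}
    (hC : C ∈ P.parts) (hD : D ∈ P.parts) (hne : C ≠ D) :
    (∀ y ∈ C, ∀ z ∈ D, σ y < σ z) ∨ (∀ y ∈ C, ∀ z ∈ D, σ z < σ y) := by
  have hdis : ∀ z ∈ D, z ∉ C := by
    intro z hz hzC
    exact hne (P.eq_of_mem_parts hC hD hzC hz)
  have stepA : ∀ z ∈ D, (∀ y ∈ C, σ y < σ z) ∨ (∀ y ∈ C, σ z < σ y) := by
    intro z hz
    by_contra hcon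
    push_neg at hcon
    obtain ⟨⟨y1, hy1, h1⟩, ⟨y2, hy2, h2⟩⟩ := hcon
    have hzy1 : σ z < σ y1 := lt_of_le_of_ne h1 (fun h => hdis z hz (by
      have := σ.injective h; rwa [← this] at hy1))
    have hy2z : σ y2 < σ z := lt_of_le_of_ne h2 (fun h => hdis z hz (by
      have := σ.injective h; rwa [this] at hy2))
    obtain ⟨B', hB', hy2', hy1', hz'⟩ := hσ y2 y1 z ⟨C, hC, hy2, hy1⟩ hy2z hzy1
    exact hdis z hz (by rwa [P.eq_of_mem_parts hB' hC hy2' hy2] at hz')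
  by_contra hcon
  push_neg at hcon
  obtain ⟨⟨y1, hy1, z1, hz1, h1⟩, ⟨y2, hy2, z2, hz2, h2⟩⟩ := hcon
  have H1 : ∀ y ∈ C, σ z1 < σ y := by
    rcases stepA z1 hz1 with h|h
    · exact absurd (h y1 hy1) (not_lt.2 h1)
    · exact h
  have H2 : ∀ y ∈ C, σ y < σ z2 := by
    rcases stepA z2 hz2 with h|h
    · exact h
    · exact absurd (h y2 hy2) (not_lt.2 h2)
  obtain ⟨y0, hy0⟩ := P.nonempty_of_mem_parts hC
  obtain ⟨B', hB', hz1', hz2', hy0'⟩ :=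
    hσ z1 z2 y0 ⟨D, hD, hz1, hz2⟩ (H1 y0 hy0) (H2 y0 hy0)
  have : B' = D := P.eq_of_mem_parts hB' hD hz1' hz1
  rw [this] at hy0'
  exact hdis y0 hy0' hy0
private lemma card_filter_split (p : N → Prop) [DecidablePred p] :
    (univ.filter p).card = ∑ D : {C // C ∈ P.parts}, (D.1.filter p).card := by
  rw [Finset.sum_coe_sort P.parts (fun D => (D.filter p).card)]
  conv_lhs => rw [← P.biUnion_parts]
  rw [Finset.filter_biUnion, Finset.card_biUnion]
  · simp
  · intro x hx y hy hxy
    exact Finset.disjoint_filter_filter (P.supIndep.pairwiseDisjoint hx hy hxy)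

private noncomputable def repr' (C : {C // C ∈ P.parts}) : N :=
  (P.nonempty_of_mem_parts C.2).choose

private lemma repr'_mem (C : {C // C ∈ P.parts}) : repr' C ∈ C.1 :=
  (P.nonempty_of_mem_parts C.2).choose_spec

private lemma blk_repr' (C : {C // C ∈ P.parts}) : blk P (repr' C) = C :=
  Subtype.ext (P.part_eq_of_mem C.2 (repr'_mem C))

private lemma Psi_inj {π π' : {C // C ∈ P.parts} ≃ Fin P.parts.card}
    {ρ ρ' : (C : {C // C ∈ P.parts}) → ({y // y ∈ C.1} ≃ Fin C.1.card)}
    (h : Psi P π ρ = Psi P π' ρ') : π = π' ∧ ρ = ρ' := by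
  have hval : ∀ j, psiVal P π ρ j = psiVal P π' ρ' j := by
    intro j
    have := congrArg (fun (q : N ≃ Fin (Fintype.card N)) => (q j : ℕ)) h
    simpa [Psi_val] using this
  have hord : ∀ (τ : {C // C ∈ P.parts} ≃ Fin P.parts.card) τρ (C D : {C // C ∈ P.parts}),
      C ≠ D → (τ C < τ D ↔ psiVal P τ τρ (repr' C) < psiVal P τ τρ (repr' D)) := by
    intro τ τρ C D hne
    constructor
    · intro hlt
      exact psiVal_block_lt τ τρ (by rw [blk_repr', blk_repr']; exact hlt)
    · intro hlt
      rcases lt_trichotomy (τ C) (τ D) with h'|h'|h'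
      · exact h'
      · exact absurd (τ.injective (Fin.ext (congrArg Fin.val h'))) hne
      · exact absurd (psiVal_block_lt τ τρ
          (show τ (blk P (repr' D)) < τ (blk P (repr' C)) by
            rw [blk_repr', blk_repr']; exact h')) (by omega)
  have hπ : π = π' := by
    apply Equiv.ext
    intro C
    apply Fin.ext
    rw [← card_lt_rank π C, ← card_lt_rank π' C]
    congr 1
    ext D
    simp only [mem_filter, mem_univ, true_and]
    by_cases hDC : D = C
    · subst hDC; simp
    · rw [hord π ρ D C hDC, hord π' ρ' D C hDC, hval, hval]
  refine ⟨hπ, ?_⟩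
  funext C
  apply Equiv.ext
  intro y
  apply Fin.ext
  have h1 := psiVal_eq_of_mem π ρ (C := C) (j := y.1) y.2
  have h2 := psiVal_eq_of_mem π' ρ' (C := C) (j := y.1) y.2
  have h3 := hval y.1
  rw [h1, h2, hπ] at h3
  simp only [Subtype.coe_eta] at h3
  omega

private lemma Psi_surj {σ : N ≃ Fin (Fintype.card N)} (hσ : Compatible P σ) :
    ∃ π ρ, Psi P π ρ = σ := by
  have hrepinj : Function.Injective (fun C : {C // C ∈ P.parts} => σ (repr' C)) := by
    intro C D h
    have h2 := σ.injective h
    apply Subtype.ext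
    exact P.eq_of_mem_parts C.2 D.2 (repr'_mem C) (by rw [h2]; exact repr'_mem D)
  obtain ⟨π, hπ⟩ := rank_equiv (b := P.parts.card) (by simp [Fintype.card_coe])
    (fun C : {C // C ∈ P.parts} => σ (repr' C)) hrepinj
  have hρex : ∀ C : {C // C ∈ P.parts}, ∃ e : {y // y ∈ C.1} ≃ Fin C.1.card,
      ∀ y z, e y < e z ↔ σ y.1 < σ z.1 := by
    intro C
    exact rank_equiv (b := C.1.card) (by simp [Fintype.card_coe]) (fun y : {y // y ∈ C.1} => σ y.1)
      (fun y z h => Subtype.ext (σ.injective h))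
  choose ρ hρ using hρex
  refine ⟨π, ρ, ?_⟩
  apply Equiv.ext
  intro j
  apply Fin.ext
  rw [Psi_val, ← card_lt_rank σ j, card_filter_split (P := P) (fun y => σ y < σ j)]
  -- ρ value formula
  have hρval : ∀ (C : {C // C ∈ P.parts}) (y : {y // y ∈ C.1}),
      (ρ C y : ℕ) = (C.1.filter (fun z => σ z < σ y.1)).card := by
    intro C y
    rw [← card_lt_rank (ρ C) y, ← card_filter_subtype C.1 (fun z => σ z < σ y.1)]
    congr 1
    ext z
    simp only [mem_filter, mem_univ, true_and]
    exact hρ C z y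
  have h9 : (ρ (blk P j) ⟨j, mem_blk P j⟩ : ℕ)
      = ((blk P j).1.filter (fun z => σ z < σ j)).card := hρval _ _
  rw [psiVal, h9]
  have hsplit : ∑ D : {C // C ∈ P.parts}, (D.1.filter (fun y => σ y < σ j)).card
      = ((blk P j).1.filter (fun y => σ y < σ j)).card
        + ∑ D ∈ univ.erase (blk P j), (D.1.filter (fun y => σ y < σ j)).card := by
    rw [← Finset.add_sum_erase _ _ (mem_univ (blk P j))]
  rw [hsplit]
  have hoff : offsetP P π (blk P j)
      = ∑ D ∈ univ.erase (blk P j), (D.1.filter (fun y => σ y < σ j)).card := by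
    rw [offsetP]
    rw [Finset.sum_filter]
    rw [← Finset.add_sum_erase _ _ (mem_univ (blk P j))]
    rw [if_neg (lt_irrefl _)]
    rw [zero_add]
    apply Finset.sum_congr rfl
    intro D hD
    have hne : D.1 ≠ (blk P j).1 := by
      intro h
      exact (Finset.mem_erase.1 hD).1 (Subtype.ext h)
    rcases sep hσ D.2 (blk P j).2 hne with h|h
    · rw [if_pos, Finset.filter_true_of_mem]
      · intro y hy; exact h y hy j (mem_blk P j)
      · rw [hπ]; exact h (repr' D) (repr'_mem D) (repr' (blk P j)) (repr'_mem (blk P j))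
    · rw [if_neg, Finset.filter_false_of_mem, Finset.card_empty]
      · intro y hy
        exact not_lt.2 (le_of_lt (h y hy j (mem_blk P j)))
      · rw [hπ]
        exact not_lt.2 (le_of_lt (h (repr' D) (repr'_mem D) (repr' (blk P j))
          (repr'_mem (blk P j))))
  rw [hoff]
  omega

private noncomputable def prodEquiv (P : Finpartition (Finset.univ : Finset N)) :
    (({C // C ∈ P.parts} ≃ Fin P.parts.card) ×
      ((C : {C // C ∈ P.parts}) → ({y // y ∈ C.1} ≃ Fin C.1.card)))
      ≃ {σ : N ≃ Fin (Fintype.card N) // Compatible P σ} :=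
  Equiv.ofBijective (fun pr => ⟨Psi P pr.1 pr.2, Psi_compatible pr.1 pr.2⟩)
    ⟨by
      rintro ⟨π, ρ⟩ ⟨π', ρ'⟩ h
      obtain ⟨h1, h2⟩ := Psi_inj (Subtype.ext_iff.1 h)
      exact Prod.ext h1 h2,
     by
      rintro ⟨σ, hσ⟩
      obtain ⟨π, ρ, h⟩ := Psi_surj hσ
      exact ⟨⟨π, ρ⟩, Subtype.ext h⟩⟩

private lemma card_compatPerms (P : Finpartition (Finset.univ : Finset N)) :
    ((compatPerms P).card : ℝ)
      = (P.parts.card.factorial : ℝ)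
        * ∏ C : {C // C ∈ P.parts}, (C.1.card.factorial : ℝ) := by
  have h1 : (compatPerms P).card = Fintype.card {σ : N ≃ Fin (Fintype.card N) // Compatible P σ} := by
    rw [Fintype.card_subtype]; rfl
  rw [h1, ← Fintype.card_congr (prodEquiv P), Fintype.card_prod, Fintype.card_pi]
  push_cast
  congr 1
  · rw [card_equiv_fin (by simp [Fintype.card_coe])]
  · apply Finset.prod_congr rfl
    intro C _
    rw [card_equiv_fin (by simp [Fintype.card_coe])]

private lemma sum_compatPerms (P : Finpartition (Finset.univ : Finset N))
    (F : (N ≃ Fin (Fintype.card N)) → ℝ) :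
    ∑ σ ∈ compatPerms P, F σ
      = ∑ pr : (({C // C ∈ P.parts} ≃ Fin P.parts.card) ×
          ((C : {C // C ∈ P.parts}) → ({y // y ∈ C.1} ≃ Fin C.1.card))),
          F (Psi P pr.1 pr.2) := by
  rw [Finset.sum_subtype (p := Compatible P) (compatPerms P) (fun x => by simp [compatPerms]) F,
    ← Equiv.sum_comp (prodEquiv P) (fun t => F t.1)]
  rfl

private def succs {N : Type} [Fintype N] (σ : N ≃ Fin (Fintype.card N)) (i : N) : Finset N :=
  Finset.univ.filter (fun j => σ i < σ j)

private lemma compat_rev {σ : N ≃ Fin (Fintype.card N)} (hσ : Compatible P σ) :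
    Compatible P (σ.trans Fin.revPerm) := by
  intro i j k hij h1 h2
  simp only [Equiv.trans_apply, Fin.revPerm_apply, Fin.rev_lt_rev] at h1 h2
  obtain ⟨B0, hB0, hi, hj⟩ := hij
  obtain ⟨B', hB', hj', hi', hk'⟩ := hσ j i k ⟨B0, hB0, hj, hi⟩ h2 h1
  exact ⟨B', hB', hi', hj', hk'⟩

private lemma preds_rev (σ : N ≃ Fin (Fintype.card N)) (i : N) :
    preds (σ.trans Fin.revPerm) i = succs σ i := by
  ext j
  simp [preds, succs, Fin.rev_lt_rev]

private lemma rev_rev_eq (σ : N ≃ Fin (Fintype.card N)) :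
    (σ.trans Fin.revPerm).trans Fin.revPerm = σ := by
  apply Equiv.ext
  intro j
  simp [Fin.rev_rev]

private lemma sum_payment (P : Finpartition (Finset.univ : Finset N)) (c : N → ℝ) (E : ℝ)
    (i : N) (hc : 0 ≤ c i)
    (v : Finset N → ℝ) (hv : ∀ S : Finset N, v S = max 0 (E - ∑ j ∈ Sᶜ, c j)) :
    ∑ σ ∈ compatPerms P, min (c i) (max 0 (E - ∑ j ∈ preds σ i, c j))
      = ∑ σ ∈ compatPerms P, (v (insert i (preds σ i)) - v (preds σ i)) := by
  have hrev : ∑ σ ∈ compatPerms P, min (c i) (max 0 (E - ∑ j ∈ preds σ i, c j))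
      = ∑ σ ∈ compatPerms P, min (c i) (max 0 (E - ∑ j ∈ succs σ i, c j)) := by
    apply Finset.sum_nbij' (fun σ => σ.trans Fin.revPerm) (fun σ => σ.trans Fin.revPerm)
    · intro σ hσ
      simp only [compatPerms, mem_filter, mem_univ, true_and] at hσ ⊢
      exact compat_rev hσ
    · intro σ hσ
      simp only [compatPerms, mem_filter, mem_univ, true_and] at hσ ⊢
      exact compat_rev hσ
    · intro σ _; exact rev_rev_eq σ
    · intro σ _; exact rev_rev_eq σ
    · intro σ _
      rw [show succs (σ.trans Fin.revPerm) i = preds σ i from by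
        ext j; simp [preds, succs, Fin.rev_lt_rev]]
  rw [hrev]
  apply Finset.sum_congr rfl
  intro σ _
  have h1 : (insert i (preds σ i))ᶜ = succs σ i := by
    ext j
    simp only [Finset.mem_compl, Finset.mem_insert, preds, succs, mem_filter, mem_univ, true_and]
    push_neg
    constructor
    · rintro ⟨hji, hle⟩
      exact lt_of_le_of_ne hle (fun h => hji (σ.injective h).symm)
    · intro h
      refine ⟨fun hji => ?_, le_of_lt h⟩
      rw [hji] at h
      exact lt_irrefl _ h
  have h2 : (preds σ i)ᶜ = insert i (succs σ i) := by
    ext j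
    simp only [Finset.mem_compl, Finset.mem_insert, preds, succs, mem_filter, mem_univ, true_and]
    constructor
    · intro hle
      rcases lt_trichotomy (σ i) (σ j) with h|h|h
      · exact Or.inr h
      · exact Or.inl (σ.injective h).symm
      · exact absurd h hle
    · rintro (rfl|h)
      · exact lt_irrefl _
      · exact fun h' => lt_asymm h h'
  have hins : i ∉ succs σ i := by simp [succs]
  rw [hv, hv, h1, h2, Finset.sum_insert hins]
  have := real_median (c i) (E - ∑ j ∈ succs σ i, c j) hc
  rw [← this]
  ring_nf

private def Rstat (π : {C // C ∈ P.parts} ≃ Fin P.parts.card) (Bs : {C // C ∈ P.parts}) :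
    Finset (Finset N) :=
  (univ.filter (fun C => π C < π Bs)).image Subtype.val

private def Sstat {B : Finset N} (ρB : {y // y ∈ B} ≃ Fin B.card) (i : N) (hiB : i ∈ B) :
    Finset N :=
  ((univ : Finset {y // y ∈ B}).filter (fun y => ρB y < ρB ⟨i, hiB⟩)).image Subtype.val

private lemma Rstat_subset (π) (Bs : {C // C ∈ P.parts}) :
    Rstat π Bs ⊆ P.parts.erase Bs.1 := by
  intro C' hC'
  simp only [Rstat, mem_image, mem_filter, mem_univ, true_and] at hC'
  obtain ⟨D, hD, rfl⟩ := hC'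
  rw [Finset.mem_erase]
  refine ⟨fun h => ?_, D.2⟩
  rw [show D = Bs from Subtype.ext h] at hD
  exact lt_irrefl _ hD

private lemma Sstat_subset {B : Finset N} (ρB : {y // y ∈ B} ≃ Fin B.card) (i : N) (hiB : i ∈ B) :
    Sstat ρB i hiB ⊆ B.erase i := by
  intro y' hy'
  simp only [Sstat, mem_image, mem_filter, mem_univ, true_and] at hy'
  obtain ⟨y, hy, rfl⟩ := hy'
  rw [Finset.mem_erase]
  refine ⟨fun h => ?_, y.2⟩
  rw [show y = ⟨i, hiB⟩ from Subtype.ext h] at hy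
  exact lt_irrefl _ hy

private lemma preds_Psi (π ρ) {i : N} (Bs : {C // C ∈ P.parts}) (hiB : i ∈ Bs.1) :
    preds (Psi P π ρ) i = (Rstat π Bs).biUnion id ∪ Sstat (ρ Bs) i hiB := by
  have hbi : blk P i = Bs := Subtype.ext (P.part_eq_of_mem Bs.2 hiB)
  ext j
  have hlt : j ∈ preds (Psi P π ρ) i ↔ psiVal P π ρ j < psiVal P π ρ i := by
    simp [preds, Fin.lt_def, Psi_val]
  rw [hlt, Finset.mem_union]
  by_cases hj : j ∈ Bs.1
  · have hSm : j ∈ Sstat (ρ Bs) i hiB ↔ ρ Bs ⟨j, hj⟩ < ρ Bs ⟨i, hiB⟩ := by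
      simp only [Sstat, mem_image, mem_filter, mem_univ, true_and]
      constructor
      · rintro ⟨y, hy, rfl⟩
        convert hy using 2
      · intro h
        exact ⟨⟨j, hj⟩, h, rfl⟩
    have hnB : j ∉ (Rstat π Bs).biUnion id := by
      intro hmem
      simp only [Finset.mem_biUnion, id] at hmem
      obtain ⟨C', hC', hjC'⟩ := hmem
      have h2 := Rstat_subset π Bs hC'
      rw [Finset.mem_erase] at h2
      exact h2.1 (P.eq_of_mem_parts h2.2 Bs.2 hjC' hj)
    rw [psiVal_same_block π ρ hj hiB, hSm]
    simp [hnB]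
  · have hne : blk P j ≠ Bs := by
      intro h
      rw [← h] at hj
      exact hj (mem_blk P j)
    have hnS : j ∉ Sstat (ρ Bs) i hiB := fun h => hj (Finset.mem_of_mem_erase (Sstat_subset _ _ _ h))
    have hmb : j ∈ (Rstat π Bs).biUnion id ↔ π (blk P j) < π Bs := by
      simp only [Finset.mem_biUnion, id, Rstat, mem_image, mem_filter, mem_univ, true_and]
      constructor
      · rintro ⟨C', ⟨D, hD, rfl⟩, hjD⟩
        rwa [show D = blk P j from Subtype.ext ((P.part_eq_of_mem D.2 hjD).symm)] at hD
      · intro h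
        exact ⟨(blk P j).1, ⟨blk P j, h, rfl⟩, mem_blk P j⟩
    have hval : psiVal P π ρ j < psiVal P π ρ i ↔ π (blk P j) < π Bs := by
      constructor
      · intro h
        rcases lt_trichotomy (π (blk P j)) (π Bs) with h'|h'|h'
        · exact h'
        · exact absurd (π.injective (Fin.ext (congrArg Fin.val h'))) hne
        · exact absurd (psiVal_block_lt π ρ
            (show π (blk P i) < π (blk P j) by rw [hbi]; exact h')) (by omega)
      · intro h
        exact psiVal_block_lt π ρ (show π (blk P j) < π (blk P i) by rw [hbi]; exact h)
    rw [hval, hmb]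
    simp [hnS]

private lemma card_Rfiber (Bs : {C // C ∈ P.parts}) (R : Finset (Finset N))
    (hR : R ⊆ P.parts.erase Bs.1) :
    ((univ : Finset ({C // C ∈ P.parts} ≃ Fin P.parts.card)).filter
        (fun π => Rstat π Bs = R)).card
      = Nat.factorial R.card * Nat.factorial (P.parts.card - R.card - 1) := by
  have hRP : ∀ {C'}, C' ∈ R → C' ∈ P.parts := fun h => Finset.mem_of_mem_erase (hR h)
  have hcond : ∀ π : {C // C ∈ P.parts} ≃ Fin P.parts.card,
      Rstat π Bs = R ↔ ∀ C : {C // C ∈ P.parts},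
        (π C < π Bs ↔ C ∈ univ.filter (fun C : {C // C ∈ P.parts} => C.1 ∈ R)) := by
    intro π
    constructor
    · rintro rfl C
      simp only [mem_filter, mem_univ, true_and, Rstat, mem_image, mem_filter, mem_univ, true_and]
      constructor
      · intro h; exact ⟨C, h, rfl⟩
      · rintro ⟨D, hD, hDC⟩
        rwa [show D = C from Subtype.ext hDC] at hD
    · intro h
      ext C'
      simp only [Rstat, mem_image, mem_filter, mem_univ, true_and]
      constructor
      · rintro ⟨D, hD, rfl⟩
        have := (h D).1 hD
        simpa using this
      · intro hC'
        refine ⟨⟨C', hRP hC'⟩, (h _).2 (by simpa using hC'), rfl⟩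
  have hT : (univ.filter (fun C : {C // C ∈ P.parts} => C.1 ∈ R)).card = R.card := by
    rw [card_filter_subtype P.parts (fun C => C ∈ R)]
    congr 1
    ext C'
    simp only [mem_filter]
    exact ⟨fun h => h.2, fun h => ⟨hRP h, h⟩⟩
  have hx : Bs ∉ univ.filter (fun C : {C // C ∈ P.parts} => C.1 ∈ R) := by
    simp only [mem_filter, mem_univ, true_and]
    intro h
    exact (Finset.mem_erase.1 (hR h)).1 rfl
  rw [Finset.filter_congr (fun π _ => by rw [hcond π]),
    card_fiber (by simp [Fintype.card_coe]) Bs _ hx, hT]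

private lemma card_Sfiber {B : Finset N} (i : N) (hiB : i ∈ B) (S : Finset N)
    (hS : S ⊆ B.erase i) :
    ((univ : Finset ({y // y ∈ B} ≃ Fin B.card)).filter
        (fun ρB => Sstat ρB i hiB = S)).card
      = Nat.factorial S.card * Nat.factorial (B.card - S.card - 1) := by
  have hSB : ∀ {y}, y ∈ S → y ∈ B := fun h => Finset.mem_of_mem_erase (hS h)
  have hcond : ∀ ρB : {y // y ∈ B} ≃ Fin B.card,
      Sstat ρB i hiB = S ↔ ∀ y : {y // y ∈ B},
        (ρB y < ρB ⟨i, hiB⟩ ↔ y ∈ univ.filter (fun y : {y // y ∈ B} => y.1 ∈ S)) := by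
    intro ρB
    constructor
    · rintro rfl y
      simp only [mem_filter, mem_univ, true_and, Sstat, mem_image, mem_filter, mem_univ, true_and]
      constructor
      · intro h; exact ⟨y, h, rfl⟩
      · rintro ⟨z, hz, hzy⟩
        rwa [show z = y from Subtype.ext hzy] at hz
    · intro h
      ext y'
      simp only [Sstat, mem_image, mem_filter, mem_univ, true_and]
      constructor
      · rintro ⟨z, hz, rfl⟩
        have := (h z).1 hz
        simpa using this
      · intro hy'
        refine ⟨⟨y', hSB hy'⟩, (h _).2 (by simpa using hy'), rfl⟩
  have hT : (univ.filter (fun y : {y // y ∈ B} => y.1 ∈ S)).card = S.card := by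
    rw [card_filter_subtype B (fun y => y ∈ S)]
    congr 1
    ext y'
    simp only [mem_filter]
    exact ⟨fun h => h.2, fun h => ⟨hSB h, h⟩⟩
  have hx : (⟨i, hiB⟩ : {y // y ∈ B}) ∉ univ.filter (fun y : {y // y ∈ B} => y.1 ∈ S) := by
    simp only [mem_filter, mem_univ, true_and]
    intro h
    exact (Finset.mem_erase.1 (hS h)).1 rfl
  rw [Finset.filter_congr (fun ρB _ => by rw [hcond ρB]),
    card_fiber (by simp [Fintype.card_coe]) _ _ hx, hT]

private lemma sum_preds_fn (P : Finpartition (Finset.univ : Finset N)) (i : N)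
    (Bs : {C // C ∈ P.parts}) (hiB : i ∈ Bs.1) (φ : Finset N → ℝ) :
    ∑ σ ∈ compatPerms P, φ (preds σ i)
      = (Fintype.card ((D : { j : {C // C ∈ P.parts} // j ≠ Bs }) →
            ({y // y ∈ D.1.1} ≃ Fin D.1.1.card)) : ℝ)
        * ∑ R ∈ (P.parts.erase Bs.1).powerset,
            ((R.card.factorial * (P.parts.card - R.card - 1).factorial : ℕ) : ℝ)
            * ∑ S ∈ (Bs.1.erase i).powerset,
                ((S.card.factorial * (Bs.1.card - S.card - 1).factorial : ℕ) : ℝ)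
                * φ (R.biUnion id ∪ S) := by
  set K : ℝ := (Fintype.card ((D : { j : {C // C ∈ P.parts} // j ≠ Bs }) →
      ({y // y ∈ D.1.1} ≃ Fin D.1.1.card)) : ℝ) with hK
  rw [sum_compatPerms P (fun σ => φ (preds σ i))]
  have h1 : ∀ pr : (({C // C ∈ P.parts} ≃ Fin P.parts.card) ×
      ((C : {C // C ∈ P.parts}) → ({y // y ∈ C.1} ≃ Fin C.1.card))),
      φ (preds (Psi P pr.1 pr.2) i)
        = φ ((Rstat pr.1 Bs).biUnion id ∪ Sstat (pr.2 Bs) i hiB) := by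
    intro pr
    rw [preds_Psi pr.1 pr.2 Bs hiB]
  rw [Finset.sum_congr rfl (fun pr _ => h1 pr), Fintype.sum_prod_type]
  have hinner : ∀ π : {C // C ∈ P.parts} ≃ Fin P.parts.card,
      (∑ ρ : (C : {C // C ∈ P.parts}) → ({y // y ∈ C.1} ≃ Fin C.1.card),
          φ ((Rstat π Bs).biUnion id ∪ Sstat (ρ Bs) i hiB))
        = K * ∑ S ∈ (Bs.1.erase i).powerset,
            ((S.card.factorial * (Bs.1.card - S.card - 1).factorial : ℕ) : ℝ)
            * φ ((Rstat π Bs).biUnion id ∪ S) := by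
    intro π
    have step1 : (∑ ρ : (C : {C // C ∈ P.parts}) → ({y // y ∈ C.1} ≃ Fin C.1.card),
        φ ((Rstat π Bs).biUnion id ∪ Sstat (ρ Bs) i hiB))
        = ∑ q : ({y // y ∈ Bs.1} ≃ Fin Bs.1.card) ×
            ((D : { j : {C // C ∈ P.parts} // j ≠ Bs }) →
              ({y // y ∈ D.1.1} ≃ Fin D.1.1.card)),
            φ ((Rstat π Bs).biUnion id ∪ Sstat q.1 i hiB) := by
      rw [← Equiv.sum_comp (Equiv.piSplitAt Bs
        (fun C : {C // C ∈ P.parts} => ({y // y ∈ C.1} ≃ Fin C.1.card)))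
        (fun q => φ ((Rstat π Bs).biUnion id ∪ Sstat q.1 i hiB))]
      rfl
    rw [step1, Fintype.sum_prod_type]
    have step2 : ∀ x : {y // y ∈ Bs.1} ≃ Fin Bs.1.card,
        (∑ _w : ((D : { j : {C // C ∈ P.parts} // j ≠ Bs }) →
            ({y // y ∈ D.1.1} ≃ Fin D.1.1.card)),
          φ ((Rstat π Bs).biUnion id ∪ Sstat x i hiB))
          = K * φ ((Rstat π Bs).biUnion id ∪ Sstat x i hiB) := by
      intro x
      rw [Finset.sum_const, Finset.card_univ, nsmul_eq_mul, hK]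
    rw [Finset.sum_congr rfl (fun x _ => step2 x), ← Finset.mul_sum]
    congr 1
    rw [← Finset.sum_fiberwise_of_maps_to'
      (g := fun x : {y // y ∈ Bs.1} ≃ Fin Bs.1.card => Sstat x i hiB)
      (fun x _ => Finset.mem_powerset.2 (Sstat_subset x i hiB))
      (fun S => φ ((Rstat π Bs).biUnion id ∪ S))]
    apply Finset.sum_congr rfl
    intro S hS
    rw [Finset.sum_const, nsmul_eq_mul, card_Sfiber i hiB S (Finset.mem_powerset.1 hS)]
    try push_cast
    try ring
  rw [Finset.sum_congr rfl (fun π _ => hinner π), ← Finset.mul_sum]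
  congr 1
  rw [← Finset.sum_fiberwise_of_maps_to'
    (g := fun π : {C // C ∈ P.parts} ≃ Fin P.parts.card => Rstat π Bs)
    (fun π _ => Finset.mem_powerset.2 (Rstat_subset π Bs))
    (fun R => ∑ S ∈ (Bs.1.erase i).powerset,
      ((S.card.factorial * (Bs.1.card - S.card - 1).factorial : ℕ) : ℝ)
      * φ (R.biUnion id ∪ S))]
  apply Finset.sum_congr rfl
  intro R hR
  rw [Finset.sum_const, nsmul_eq_mul, card_Rfiber Bs R (Finset.mem_powerset.1 hR)]
  try push_cast
  try ring

end psi2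


/-- For a bankruptcy problem with a priori unions `(N, c, E, P)` and
the associated bankruptcy game `v S = max 0 (E - ∑_{j ∉ S} c j)`, the Owen value of the
bankruptcy game equals the RA-random arrival rule with unions: for every `i ∈ N`, with
block `B = P_(i)`,
`∑_{R ⊆ P \ {B}} ∑_{S ⊆ B \ {i}} (|S|! (p_i-|S|-1)! |R|! (m-|R|-1)!)/(p_i! m!)
   (v (∪R ∪ S ∪ {i}) - v (∪R ∪ S))
 = (1/|Π_P(N)|) ∑_{σ ∈ Π_P(N)} min (c i) (max 0 (E - ∑_{j ∈ P_i^σ} c j))`. -/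
theorem owen_bankruptcy_eq_RAU {N : Type} [Fintype N] [DecidableEq N] [Nonempty N]
    (c : N → ℝ) (E : ℝ) (hc : ∀ i, 0 ≤ c i) (hE0 : 0 ≤ E) (hE : E ≤ ∑ j, c j)
    (v : Finset N → ℝ) (hv : ∀ S : Finset N, v S = max 0 (E - ∑ j ∈ Sᶜ, c j))
    (P : Finpartition (Finset.univ : Finset N))
    (i : N) (B : Finset N) (hB : B ∈ P.parts) (hiB : i ∈ B) :
    ∑ R ∈ (P.parts.erase B).powerset, ∑ S ∈ (B.erase i).powerset,
        ((Nat.factorial S.card * Nat.factorial (B.card - S.card - 1) *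
          Nat.factorial R.card * Nat.factorial (P.parts.card - R.card - 1) : ℝ) /
          ((Nat.factorial B.card : ℝ) * (Nat.factorial P.parts.card : ℝ))) *
        (v (insert i (R.biUnion id ∪ S)) - v (R.biUnion id ∪ S))
      = (1 / ((compatPerms P).card : ℝ)) *
          ∑ σ ∈ compatPerms P,
            min (c i) (max 0 (E - ∑ j ∈ preds σ i, c j)) := by
  have h1 := sum_payment P c E i (hc i) v hv
  have h2 := sum_preds_fn P i ⟨B, hB⟩ hiB (fun X => v (insert i X) - v X)
  have h3 := card_compatPerms P
  rw [h1, h2, h3]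
  -- notation
  set K : ℝ := (Fintype.card ((D : { j : {C // C ∈ P.parts} // j ≠ (⟨B, hB⟩ : {C // C ∈ P.parts}) }) →
      ({y // y ∈ D.1.1} ≃ Fin D.1.1.card)) : ℝ) with hK
  have hKval : K = ∏ D : { j : {C // C ∈ P.parts} // j ≠ (⟨B, hB⟩ : {C // C ∈ P.parts}) },
      ((D.1.1.card.factorial : ℕ) : ℝ) := by
    rw [hK, Fintype.card_pi]
    push_cast
    apply Finset.prod_congr rfl
    intro D _
    rw [card_equiv_fin (by simp [Fintype.card_coe])]
  have hprod : ∏ C : {C // C ∈ P.parts}, ((C.1.card.factorial : ℕ) : ℝ)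
      = ((B.card.factorial : ℕ) : ℝ) * K := by
    rw [← Finset.mul_prod_erase univ _ (mem_univ (⟨B, hB⟩ : {C // C ∈ P.parts})), hKval]
    congr 1
    rw [Finset.prod_subtype (univ.erase (⟨B, hB⟩ : {C // C ∈ P.parts}))
      (p := fun C => C ≠ (⟨B, hB⟩ : {C // C ∈ P.parts})) (by intro x; simp)]
  have hKpos : 0 < K := by
    rw [hKval]
    apply Finset.prod_pos
    intro D _
    exact_mod_cast Nat.factorial_pos _
  have hfacB : (0:ℝ) < ((B.card.factorial : ℕ) : ℝ) := by exact_mod_cast Nat.factorial_pos _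
  have hfacm : (0:ℝ) < ((P.parts.card.factorial : ℕ) : ℝ) := by exact_mod_cast Nat.factorial_pos _
  rw [hprod]
  rw [← mul_assoc, Finset.mul_sum]
  apply Finset.sum_congr rfl
  intro R hR
  rw [← mul_assoc, Finset.mul_sum]
  apply Finset.sum_congr rfl
  intro S hS
  rw [← mul_assoc]
  congr 1
  push_cast
  field_simp
end

section
/- Let (N,c,E,P) be a bankruptcy problem with a priori unions, i ∈ N with c_i > 0, ε > 0 and α ∈ (0,1). Let ℓ ≥ 1 and equip Π_P(N)^ℓ with the ℓ-fold product of the uniform probability measure on Π_P(N); define the estimator RA̅^P_i(σ_1,…,σ_ℓ) = (1/ℓ) Σ_{k=1}^{ℓ} x(σ_k)_i. If ℓ ≥ c_i²/(4αε²), then ℙ( |RA̅^P_i − RA^P_i| ≥ ε ) ≤ α. -/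
open Finset
open scoped Classical

/-- The estimator: the mean of the marginal payments of `i` over a sample
`ω = (σ_1, …, σ_ℓ)` of `ℓ` compatible permutations. -/
noncomputable def estimator {N : Type} [Fintype N] [DecidableEq N]
    (c : N → ℝ) (E : ℝ) (P : Finpartition (Finset.univ : Finset N)) (i : N)
    (ℓ : ℕ) (ω : Fin ℓ → {σ : N ≃ Fin (Fintype.card N) // σ ∈ compatPerms P}) : ℝ :=
  (1 / (ℓ : ℝ)) * ∑ k : Fin ℓ, payment c E (ω k).1 i

open scoped Classical

lemma aux_sum_cons {S : Type} [Fintype S] (m : ℕ) (F : (Fin (m+1) → S) → ℝ) :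
    ∑ ω : Fin (m+1) → S, F ω = ∑ s : S, ∑ ω : Fin m → S, F (Fin.cons s ω) := by
  rw [← Equiv.sum_comp (Fin.consEquiv fun _ : Fin (m+1) => S) F, Fintype.sum_prod_type]
  rfl

lemma aux_zero {S : Type} [Fintype S] (g : S → ℝ) (hg : ∑ s, g s = 0) (ℓ : ℕ) :
    ∑ ω : Fin ℓ → S, ∑ k, g (ω k) = 0 := by
  induction ℓ with
  | zero => simp
  | succ m ih =>
    rw [aux_sum_cons]
    simp only [Fin.sum_univ_succ, Fin.cons_zero, Fin.cons_succ]
    have : ∀ s : S, ∑ ω : Fin m → S, (g s + ∑ k : Fin m, g (ω k))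
        = (Fintype.card (Fin m → S) : ℝ) * g s := by
      intro s
      rw [Finset.sum_add_distrib, ih, add_zero, Finset.sum_const, Finset.card_univ,
        nsmul_eq_mul]
    simp_rw [this, ← Finset.mul_sum, hg, mul_zero]

lemma aux_sq {S : Type} [Fintype S] (g : S → ℝ) (hg : ∑ s, g s = 0) (ℓ : ℕ) :
    (Fintype.card S : ℝ) * ∑ ω : Fin ℓ → S, (∑ k, g (ω k)) ^ 2
      = ℓ * (Fintype.card S : ℝ) ^ ℓ * ∑ s, g s ^ 2 := by
  induction ℓ with
  | zero => simp
  | succ m ih =>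
    rw [aux_sum_cons]
    simp only [Fin.sum_univ_succ, Fin.cons_zero, Fin.cons_succ]
    have key : ∀ s : S, ∑ ω : Fin m → S, (g s + ∑ k : Fin m, g (ω k)) ^ 2
        = (Fintype.card (Fin m → S) : ℝ) * g s ^ 2
          + ∑ ω : Fin m → S, (∑ k : Fin m, g (ω k)) ^ 2 := by
      intro s
      have expand : ∀ ω : Fin m → S, (g s + ∑ k : Fin m, g (ω k)) ^ 2
          = g s ^ 2 + 2 * g s * (∑ k : Fin m, g (ω k)) + (∑ k : Fin m, g (ω k)) ^ 2 := by
        intro ω; ring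
      simp_rw [expand]
      rw [Finset.sum_add_distrib, Finset.sum_add_distrib, Finset.sum_const,
        Finset.card_univ, nsmul_eq_mul, ← Finset.mul_sum, aux_zero g hg m, mul_zero, add_zero]
    simp_rw [key]
    rw [Finset.sum_add_distrib, Finset.sum_const, Finset.card_univ, nsmul_eq_mul,
      ← Finset.mul_sum, mul_add]
    have hcard : (Fintype.card (Fin m → S) : ℝ) = (Fintype.card S : ℝ) ^ m := by
      rw [Fintype.card_fun]; push_cast; simp
    rw [hcard]
    have : (Fintype.card S : ℝ) * ((Fintype.card S : ℝ)
        * ∑ ω : Fin m → S, (∑ k : Fin m, g (ω k)) ^ 2)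
        = (Fintype.card S : ℝ) * (m * (Fintype.card S : ℝ) ^ m * ∑ s, g s ^ 2) := by
      rw [ih]
    rw [this]
    push_cast
    ring

set_option maxHeartbeats 1600000 in
/-- (Chebyshev/Popoviciu sample size bound.) If the sample size
satisfies `ℓ ≥ c i ² / (4 α ε²)`, then under the `ℓ`-fold product of the uniform
probability measure on `Π_P(N)` (i.e. the uniform measure on the finite product space),
`ℙ(|RA̅^P_i − RA^P_i| ≥ ε) ≤ α`. -/
theorem chebyshev_sample_size_bound {N : Type} [Fintype N] [DecidableEq N] [Nonempty N]
    (c : N → ℝ) (E : ℝ) (hc : ∀ i, 0 ≤ c i) (hE0 : 0 ≤ E) (hE : E ≤ ∑ j, c j)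
    (P : Finpartition (Finset.univ : Finset N)) (i : N) (hci : 0 < c i)
    (ε α : ℝ) (hε : 0 < ε) (hα0 : 0 < α) (hα1 : α < 1)
    (ℓ : ℕ) (hℓ : 1 ≤ ℓ)
    (hsize : (ℓ : ℝ) ≥ c i ^ 2 / (4 * α * ε ^ 2)) :
    ((Finset.univ.filter
        (fun ω : Fin ℓ → {σ : N ≃ Fin (Fintype.card N) // σ ∈ compatPerms P} =>
          ε ≤ |estimator c E P i ℓ ω - RAU c E P i|)).card : ℝ) /
      (Fintype.card (Fin ℓ → {σ : N ≃ Fin (Fintype.card N) // σ ∈ compatPerms P}) : ℝ)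
      ≤ α := by
  classical
  set S := {σ : N ≃ Fin (Fintype.card N) // σ ∈ compatPerms P} with hS
  set n := Fintype.card S with hn
  have hcardΩ : Fintype.card (Fin ℓ → S) = n ^ ℓ := by
    rw [Fintype.card_fun, Fintype.card_fin]
  by_cases hn0 : n = 0
  · have h0 : (Fintype.card (Fin ℓ → S) : ℝ) = 0 := by
      rw [hcardΩ, hn0]
      norm_num
      omega
    rw [h0, div_zero]
    exact hα0.le
  -- main case
  have hnpos : 0 < (n : ℝ) := by
    have : 0 < n := Nat.pos_of_ne_zero hn0
    exact_mod_cast this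
  have hℓpos : 0 < (ℓ : ℝ) := by exact_mod_cast hℓ
  set f : S → ℝ := fun s => payment c E s.1 i with hf
  set μ : ℝ := RAU c E P i with hμdef
  -- RAU as an average over the subtype
  have hcards : n = (compatPerms P).card := Fintype.card_coe _
  have hsumf : ∑ s : S, f s = ∑ σ ∈ compatPerms P, payment c E σ i :=
    Finset.sum_coe_sort (compatPerms P) (fun σ => payment c E σ i)
  have hμ : μ = (1 / (n : ℝ)) * ∑ s : S, f s := by
    rw [hμdef, RAU, hsumf, hcards]
  have hsum_eq : ∑ s : S, f s = (n : ℝ) * μ := by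
    rw [hμ]; field_simp
  -- bounds on f
  have hf0 : ∀ s : S, 0 ≤ f s := fun s => le_min (hc i) (le_max_left _ _)
  have hfc : ∀ s : S, f s ≤ c i := fun s => min_le_left _ _
  have hsum0 : 0 ≤ ∑ s : S, f s := Finset.sum_nonneg fun s _ => hf0 s
  have hsumc : ∑ s : S, f s ≤ (n : ℝ) * c i := by
    calc ∑ s : S, f s ≤ ∑ _s : S, c i := Finset.sum_le_sum fun s _ => hfc s
      _ = (n : ℝ) * c i := by rw [Finset.sum_const, Finset.card_univ, nsmul_eq_mul]
  have hμ0 : 0 ≤ μ := by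
    rw [hμ]; positivity
  have hμc : μ ≤ c i := by
    rw [hμ]
    rw [div_mul_eq_mul_div, one_mul, div_le_iff₀ hnpos]
    linarith [hsumc]
  -- centered variable
  set g : S → ℝ := fun s => f s - μ with hgdef
  have hg : ∑ s : S, g s = 0 := by
    simp only [hgdef, Finset.sum_sub_distrib, Finset.sum_const, Finset.card_univ,
      nsmul_eq_mul, hsum_eq]
    ring
  -- Popoviciu-type variance bound
  have hf_sq : ∑ s : S, f s ^ 2 ≤ c i * ∑ s : S, f s := by
    rw [Finset.mul_sum]
    refine Finset.sum_le_sum fun s _ => ?_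
    nlinarith [hf0 s, hfc s]
  have hVexp : ∑ s : S, g s ^ 2 = ∑ s : S, f s ^ 2 - (n : ℝ) * μ ^ 2 := by
    have : ∀ s : S, g s ^ 2 = f s ^ 2 - 2 * μ * f s + μ ^ 2 := by
      intro s; simp only [hgdef]; ring
    rw [Finset.sum_congr rfl fun s _ => this s]
    rw [Finset.sum_add_distrib, Finset.sum_sub_distrib, Finset.sum_const, Finset.card_univ,
      nsmul_eq_mul, ← Finset.mul_sum, hsum_eq]
    ring
  have hV : ∑ s : S, g s ^ 2 ≤ (n : ℝ) * (c i ^ 2 / 4) := by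
    rw [hVexp]
    have h1 : ∑ s : S, f s ^ 2 ≤ c i * ((n : ℝ) * μ) := by rw [← hsum_eq]; exact hf_sq
    nlinarith [sq_nonneg (c i / 2 - μ), hnpos]
  -- the key second-moment identity
  have hkey : (n : ℝ) * ∑ ω : Fin ℓ → S, (∑ k, g (ω k)) ^ 2
      = (ℓ : ℝ) * (n : ℝ) ^ ℓ * ∑ s : S, g s ^ 2 := aux_sq g hg ℓ
  -- Markov step
  set A := Finset.univ.filter
      (fun ω : Fin ℓ → S => ε ≤ |estimator c E P i ℓ ω - RAU c E P i|) with hA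
  have hmem : ∀ ω ∈ A, (ℓ : ℝ) ^ 2 * ε ^ 2 ≤ (∑ k, g (ω k)) ^ 2 := by
    intro ω hω
    rw [hA, Finset.mem_filter] at hω
    have hdiff : estimator c E P i ℓ ω - RAU c E P i = (1 / (ℓ : ℝ)) * ∑ k, g (ω k) := by
      simp only [hgdef, Finset.sum_sub_distrib, Finset.sum_const, Finset.card_univ,
        Fintype.card_fin, nsmul_eq_mul, estimator, mul_sub]
      rw [← hμdef]
      field_simp
      rfl
    have h1 : ε ≤ |∑ k, g (ω k)| / (ℓ : ℝ) := by
      have := hω.2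
      rwa [hdiff, abs_mul, abs_of_pos (by positivity : (0:ℝ) < 1 / (ℓ:ℝ)),
        one_div, inv_mul_eq_div] at this
    have h2 : (ℓ : ℝ) * ε ≤ |∑ k, g (ω k)| := by
      rw [div_eq_inv_mul] at h1
      calc (ℓ : ℝ) * ε ≤ (ℓ : ℝ) * ((ℓ:ℝ)⁻¹ * |∑ k, g (ω k)|) := by
            exact mul_le_mul_of_nonneg_left h1 hℓpos.le
        _ = |∑ k, g (ω k)| := by field_simp
    calc (ℓ : ℝ) ^ 2 * ε ^ 2 = ((ℓ : ℝ) * ε) ^ 2 := by ring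
      _ ≤ |∑ k, g (ω k)| ^ 2 := by
          have hle : 0 ≤ (ℓ : ℝ) * ε := by positivity
          exact pow_le_pow_left₀ hle h2 2
      _ = (∑ k, g (ω k)) ^ 2 := sq_abs _
  have hcount : (A.card : ℝ) * ((ℓ : ℝ) ^ 2 * ε ^ 2)
      ≤ ∑ ω : Fin ℓ → S, (∑ k, g (ω k)) ^ 2 := by
    calc (A.card : ℝ) * ((ℓ : ℝ) ^ 2 * ε ^ 2)
        = ∑ _ω ∈ A, (ℓ : ℝ) ^ 2 * ε ^ 2 := by
          rw [Finset.sum_const, nsmul_eq_mul]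
      _ ≤ ∑ ω ∈ A, (∑ k, g (ω k)) ^ 2 := Finset.sum_le_sum hmem
      _ ≤ ∑ ω : Fin ℓ → S, (∑ k, g (ω k)) ^ 2 :=
          Finset.sum_le_sum_of_subset_of_nonneg (Finset.subset_univ A)
            (fun ω _ _ => sq_nonneg _)
  -- put it together
  have hfinal : (A.card : ℝ) ≤ α * (n : ℝ) ^ ℓ := by
    have hnl : (0:ℝ) < (n : ℝ) ^ ℓ := by positivity
    have hb : (n : ℝ) * ((A.card : ℝ) * ((ℓ : ℝ) ^ 2 * ε ^ 2))
        ≤ (ℓ : ℝ) * (n : ℝ) ^ ℓ * ((n : ℝ) * (c i ^ 2 / 4)) := by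
      calc (n : ℝ) * ((A.card : ℝ) * ((ℓ : ℝ) ^ 2 * ε ^ 2))
          ≤ (n : ℝ) * ∑ ω : Fin ℓ → S, (∑ k, g (ω k)) ^ 2 :=
            mul_le_mul_of_nonneg_left hcount hnpos.le
        _ = (ℓ : ℝ) * (n : ℝ) ^ ℓ * ∑ s : S, g s ^ 2 := hkey
        _ ≤ (ℓ : ℝ) * (n : ℝ) ^ ℓ * ((n : ℝ) * (c i ^ 2 / 4)) := by
            apply mul_le_mul_of_nonneg_left hV
            positivity
    have hc2 : c i ^ 2 ≤ 4 * α * ε ^ 2 * (ℓ : ℝ) := by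
      rw [ge_iff_le, div_le_iff₀ (by positivity : (0:ℝ) < 4 * α * ε ^ 2)] at hsize
      linarith
    -- divide out
    have h1 : (A.card : ℝ) * ((ℓ : ℝ) ^ 2 * ε ^ 2)
        ≤ (ℓ : ℝ) * (n : ℝ) ^ ℓ * (c i ^ 2 / 4) := by
      have := hb
      rw [show (ℓ : ℝ) * (n : ℝ) ^ ℓ * ((n : ℝ) * (c i ^ 2 / 4))
          = (n : ℝ) * ((ℓ : ℝ) * (n : ℝ) ^ ℓ * (c i ^ 2 / 4)) by ring] at this
      exact le_of_mul_le_mul_left this hnpos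
    have h2 : (ℓ : ℝ) * (n : ℝ) ^ ℓ * (c i ^ 2 / 4)
        ≤ α * (n : ℝ) ^ ℓ * ((ℓ : ℝ) ^ 2 * ε ^ 2) := by
      have h3 : (ℓ : ℝ) * (n : ℝ) ^ ℓ * (c i ^ 2 / 4)
          ≤ (ℓ : ℝ) * (n : ℝ) ^ ℓ * (4 * α * ε ^ 2 * (ℓ : ℝ) / 4) := by
        apply mul_le_mul_of_nonneg_left _ (by positivity)
        linarith
      calc (ℓ : ℝ) * (n : ℝ) ^ ℓ * (c i ^ 2 / 4)
          ≤ (ℓ : ℝ) * (n : ℝ) ^ ℓ * (4 * α * ε ^ 2 * (ℓ : ℝ) / 4) := h3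
        _ = α * (n : ℝ) ^ ℓ * ((ℓ : ℝ) ^ 2 * ε ^ 2) := by ring
    have h4 : (A.card : ℝ) * ((ℓ : ℝ) ^ 2 * ε ^ 2)
        ≤ α * (n : ℝ) ^ ℓ * ((ℓ : ℝ) ^ 2 * ε ^ 2) := le_trans h1 h2
    have hpos : (0:ℝ) < (ℓ : ℝ) ^ 2 * ε ^ 2 := by positivity
    exact le_of_mul_le_mul_right h4 hpos
  rw [div_le_iff₀ (by rw [hcardΩ]; positivity)]
  calc (A.card : ℝ) ≤ α * (n : ℝ) ^ ℓ := hfinal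
    _ = α * (Fintype.card (Fin ℓ → S) : ℝ) := by rw [hcardΩ]; push_cast; ring
end

section
/- Let (N,c,E,P) be a bankruptcy problem with a priori unions, i ∈ N with c_i > 0, ε > 0 and α ∈ (0,1). Let ℓ ≥ 1 and equip Π_P(N)^ℓ with the ℓ-fold product of the uniform probability measure on Π_P(N); define the estimator RA̅^P_i(σ_1,…,σ_ℓ) = (1/ℓ) Σ_{k=1}^{ℓ} x(σ_k)_i. If ℓ ≥ ln(2/α)·c_i²/(2ε²), then ℙ( |RA̅^P_i − RA^P_i| ≥ ε ) ≤ α. -/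
open Finset
open scoped Classical

section HoeffdingAux
open Real

-- key calculus lemma
lemma key_log_ineq (p : ℝ) (hp0 : 0 ≤ p) (hp1 : p ≤ 1) {h : ℝ} (hh : 0 ≤ h) :
    1 - p + p * Real.exp h ≤ Real.exp (p * h + h ^ 2 / 8) := by
  set D : ℝ → ℝ := fun x => 1 - p + p * Real.exp x with hDdef
  have hD1 : ∀ x : ℝ, 0 ≤ x → 1 ≤ D x := by
    intro x hx
    have h1 : 1 ≤ Real.exp x := Real.one_le_exp hx
    have : p * 1 ≤ p * Real.exp x := by nlinarith
    simp only [hDdef]; nlinarith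
  have hDpos : ∀ x : ℝ, 0 ≤ x → 0 < D x := fun x hx => lt_of_lt_of_le one_pos (hD1 x hx)
  have hDderiv : ∀ x : ℝ, HasDerivAt D (p * Real.exp x) x := by
    intro x
    exact ((Real.hasDerivAt_exp x).const_mul p).const_add (1 - p)
  set G : ℝ → ℝ := fun x => p + x / 4 - p * Real.exp x / D x with hGdef
  set g : ℝ → ℝ := fun x => p * x + x ^ 2 / 8 - Real.log (D x) with hgdef
  have hgderiv : ∀ x : ℝ, 0 ≤ x → HasDerivAt g (G x) x := by
    intro x hx
    have h1 : HasDerivAt (fun y : ℝ => p * y) p x := by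
      simpa using (hasDerivAt_id x).const_mul p
    have h2 : HasDerivAt (fun y : ℝ => y ^ 2 / 8) (x / 4) x := by
      have := (hasDerivAt_pow 2 x).div_const 8
      exact this.congr_deriv (by ring)
    have h3 : HasDerivAt (fun y : ℝ => Real.log (D y)) (p * Real.exp x / D x) x :=
      (hDderiv x).log (ne_of_gt (hDpos x hx))
    exact (h1.add h2).sub h3
  have hGderiv : ∀ x : ℝ, 0 ≤ x →
      HasDerivAt G (1 / 4 - (p * Real.exp x * D x - p * Real.exp x * (p * Real.exp x)) / D x ^ 2) x := by
    intro x hx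
    have h1 : HasDerivAt (fun y : ℝ => p + y / 4) (1 / 4) x := by
      simpa using ((hasDerivAt_id x).div_const 4).const_add p
    have h2 : HasDerivAt (fun y : ℝ => p * Real.exp y / D y)
        ((p * Real.exp x * D x - p * Real.exp x * (p * Real.exp x)) / D x ^ 2) x :=
      ((Real.hasDerivAt_exp x).const_mul p).div (hDderiv x) (ne_of_gt (hDpos x hx))
    exact h1.sub h2
  have hGderiv_nonneg : ∀ x : ℝ, 0 ≤ x →
      0 ≤ 1 / 4 - (p * Real.exp x * D x - p * Real.exp x * (p * Real.exp x)) / D x ^ 2 := by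
    intro x hx
    have hd := hDpos x hx
    set u := p * Real.exp x
    have : (u * D x - u * u) / D x ^ 2 ≤ 1 / 4 := by
      rw [div_le_iff₀ (by positivity)]
      nlinarith [sq_nonneg (D x / 2 - u)]
    linarith
  -- G is monotone on [0, ∞)
  have hGmono : MonotoneOn G (Set.Ici (0:ℝ)) := by
    apply monotoneOn_of_deriv_nonneg (convex_Ici 0)
    · intro x hx; exact (hGderiv x hx).continuousAt.continuousWithinAt
    · intro x hx
      rw [interior_Ici] at hx
      exact (hGderiv x (le_of_lt hx)).differentiableAt.differentiableWithinAt
    · intro x hx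
      rw [interior_Ici] at hx
      rw [(hGderiv x (le_of_lt hx)).deriv]
      exact hGderiv_nonneg x (le_of_lt hx)
  have hG0 : G 0 = 0 := by simp [hGdef, hDdef]
  have hGnonneg : ∀ x : ℝ, 0 ≤ x → 0 ≤ G x := by
    intro x hx
    have := hGmono (Set.self_mem_Ici) (Set.mem_Ici.mpr hx) hx
    rwa [hG0] at this
  have hgmono : MonotoneOn g (Set.Ici (0:ℝ)) := by
    apply monotoneOn_of_deriv_nonneg (convex_Ici 0)
    · intro x hx; exact (hgderiv x hx).continuousAt.continuousWithinAt
    · intro x hx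
      rw [interior_Ici] at hx
      exact (hgderiv x (le_of_lt hx)).differentiableAt.differentiableWithinAt
    · intro x hx
      rw [interior_Ici] at hx
      rw [(hgderiv x (le_of_lt hx)).deriv]
      exact hGnonneg x (le_of_lt hx)
  have hg0 : g 0 = 0 := by simp [hgdef, hDdef]
  have hgh : 0 ≤ g h := by
    have := hgmono (Set.self_mem_Ici) (Set.mem_Ici.mpr hh) hh
    rwa [hg0] at this
  have hlog : Real.log (D h) ≤ p * h + h ^ 2 / 8 := by
    simp only [hgdef] at hgh; linarith
  exact (Real.log_le_iff_le_exp (hDpos h hh)).mp hlog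


open scoped Classical in
lemma onesided_hoeffding {S : Type} [Fintype S] [Nonempty S] (f : S → ℝ) (B : ℝ) (hB : 0 < B)
    (h0 : ∀ s, 0 ≤ f s) (h1 : ∀ s, f s ≤ B) (ℓ : ℕ) (ε : ℝ) (hε : 0 < ε) :
    ((Finset.univ.filter (fun ω : Fin ℓ → S =>
        (∑ s, f s) / (Fintype.card S : ℝ) * ℓ + ℓ * ε ≤ ∑ k, f (ω k))).card : ℝ)
      ≤ (Fintype.card S : ℝ) ^ ℓ * Real.exp (-(2 * ℓ * ε ^ 2 / B ^ 2)) := by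
  set n : ℕ := Fintype.card S with hn
  have hnpos : 0 < (n : ℝ) := by exact_mod_cast Fintype.card_pos
  set μ : ℝ := (∑ s, f s) / (n : ℝ) with hμ
  set t : ℝ := 4 * ε / B ^ 2 with ht
  have htpos : 0 < t := by positivity
  -- step 1 : card * exp (t * (μ * ℓ + ℓ * ε)) ≤ (∑ s, exp (t * f s)) ^ ℓ
  have step1 : ((Finset.univ.filter (fun ω : Fin ℓ → S =>
        μ * ℓ + ℓ * ε ≤ ∑ k, f (ω k))).card : ℝ) * Real.exp (t * (μ * ℓ + ℓ * ε))
      ≤ (∑ s, Real.exp (t * f s)) ^ ℓ := by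
    rw [Fintype.sum_pow]
    calc ((Finset.univ.filter (fun ω : Fin ℓ → S =>
        μ * ℓ + ℓ * ε ≤ ∑ k, f (ω k))).card : ℝ) * Real.exp (t * (μ * ℓ + ℓ * ε))
        ≤ ∑ ω ∈ Finset.univ.filter (fun ω : Fin ℓ → S =>
            μ * ℓ + ℓ * ε ≤ ∑ k, f (ω k)), Real.exp (t * ∑ k, f (ω k)) := by
          rw [← nsmul_eq_mul]
          apply Finset.card_nsmul_le_sum
          intro ω hω
          rw [Finset.mem_filter] at hω
          exact Real.exp_le_exp.mpr (by nlinarith [hω.2])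
      _ ≤ ∑ ω : Fin ℓ → S, Real.exp (t * ∑ k, f (ω k)) := by
          apply Finset.sum_le_sum_of_subset_of_nonneg (Finset.filter_subset _ _)
          intro ω _ _; positivity
      _ = ∑ ω : Fin ℓ → S, ∏ k, Real.exp (t * f (ω k)) := by
          apply Finset.sum_congr rfl
          intro ω _
          rw [Finset.mul_sum, Real.exp_sum]
      _ = ∑ p : Fin ℓ → S, ∏ i, Real.exp (t * f (p i)) := rfl
  -- step 2 : mgf bound
  have hμ0 : 0 ≤ μ := by
    apply div_nonneg _ (le_of_lt hnpos)
    exact Finset.sum_nonneg fun s _ => h0 s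
  have hμB : μ ≤ B := by
    rw [hμ, div_le_iff₀ hnpos]
    calc ∑ s, f s ≤ ∑ _s : S, B := Finset.sum_le_sum fun s _ => h1 s
      _ = B * n := by simp [mul_comm, hn]
  have step2 : ∑ s, Real.exp (t * f s) ≤ (n : ℝ) * Real.exp (t * μ + t ^ 2 * B ^ 2 / 8) := by
    set p : ℝ := μ / B with hp
    have hp0 : 0 ≤ p := div_nonneg hμ0 hB.le
    have hp1 : p ≤ 1 := (div_le_one hB).mpr hμB
    have convex_step : ∀ s, Real.exp (t * f s)
        ≤ (1 - f s / B) + (f s / B) * Real.exp (t * B) := by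
      intro s
      have hl0 : 0 ≤ f s / B := div_nonneg (h0 s) hB.le
      have hl1 : f s / B ≤ 1 := (div_le_one hB).mpr (h1 s)
      have := convexOn_exp.2 (Set.mem_univ (0:ℝ)) (Set.mem_univ (t * B))
        (by linarith : (0:ℝ) ≤ 1 - f s / B) hl0 (by ring)
      simp only [smul_eq_mul, mul_zero, zero_add, Real.exp_zero, mul_one] at this
      calc Real.exp (t * f s) = Real.exp (f s / B * (t * B)) := by
            congr 1
            field_simp
        _ ≤ (1 - f s / B) * 1 + f s / B * Real.exp (t * B) := by
            simpa using this
        _ = (1 - f s / B) + (f s / B) * Real.exp (t * B) := by ring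
    calc ∑ s, Real.exp (t * f s)
        ≤ ∑ s, ((1 - f s / B) + (f s / B) * Real.exp (t * B)) :=
          Finset.sum_le_sum fun s _ => convex_step s
      _ = (n : ℝ) * (1 - p + p * Real.exp (t * B)) := by
          rw [Finset.sum_add_distrib]
          simp only [Finset.sum_sub_distrib, Finset.sum_const, Finset.card_univ,
            nsmul_eq_mul, mul_one, ← Finset.sum_div, ← Finset.sum_mul]
          rw [hp, hμ]
          field_simp
          ring
      _ ≤ (n : ℝ) * Real.exp (p * (t * B) + (t * B) ^ 2 / 8) := by
          apply mul_le_mul_of_nonneg_left _ (le_of_lt hnpos)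
          exact key_log_ineq p hp0 hp1 (by positivity)
      _ = (n : ℝ) * Real.exp (t * μ + t ^ 2 * B ^ 2 / 8) := by
          congr 1
          rw [hp]
          field_simp
  -- combine
  have hfilter_eq : (Finset.univ.filter (fun ω : Fin ℓ → S =>
        (∑ s, f s) / (n : ℝ) * ℓ + ℓ * ε ≤ ∑ k, f (ω k)))
      = (Finset.univ.filter (fun ω : Fin ℓ → S => μ * ℓ + ℓ * ε ≤ ∑ k, f (ω k))) := by
    rfl
  rw [hfilter_eq]
  have epos : 0 < Real.exp (t * (μ * ℓ + ℓ * ε)) := Real.exp_pos _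
  rw [← le_div_iff₀ epos] at step1
  calc ((Finset.univ.filter (fun ω : Fin ℓ → S =>
          μ * ℓ + ℓ * ε ≤ ∑ k, f (ω k))).card : ℝ)
      ≤ (∑ s, Real.exp (t * f s)) ^ ℓ / Real.exp (t * (μ * ℓ + ℓ * ε)) := step1
    _ ≤ ((n : ℝ) * Real.exp (t * μ + t ^ 2 * B ^ 2 / 8)) ^ ℓ
          / Real.exp (t * (μ * ℓ + ℓ * ε)) := by
        gcongr
    _ = (n : ℝ) ^ ℓ * Real.exp (-(2 * ℓ * ε ^ 2 / B ^ 2)) := by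
        have hexp : (ℓ:ℝ) * (t * μ + t ^ 2 * B ^ 2 / 8) + -(t * (μ * ℓ + ℓ * ε))
            = -(2 * ℓ * ε ^ 2 / B ^ 2) := by
          rw [ht]; field_simp; ring
        rw [mul_pow, ← Real.exp_nat_mul, div_eq_mul_inv, ← Real.exp_neg, mul_assoc,
          ← Real.exp_add, hexp]

end HoeffdingAux


set_option maxHeartbeats 1000000

/-- (Hoeffding sample size bound.) If the sample size satisfies
`ℓ ≥ ln(2/α) · c i ² / (2 ε²)`, then under the `ℓ`-fold product of the uniform
probability measure on `Π_P(N)` (i.e. the uniform measure on the finite product space),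
`ℙ(|RA̅^P_i − RA^P_i| ≥ ε) ≤ α`. -/
theorem hoeffding_sample_size_bound {N : Type} [Fintype N] [DecidableEq N] [Nonempty N]
    (c : N → ℝ) (E : ℝ) (hc : ∀ i, 0 ≤ c i) (hE0 : 0 ≤ E) (hE : E ≤ ∑ j, c j)
    (P : Finpartition (Finset.univ : Finset N)) (i : N) (hci : 0 < c i)
    (ε α : ℝ) (hε : 0 < ε) (hα0 : 0 < α) (hα1 : α < 1)
    (ℓ : ℕ) (hℓ : 1 ≤ ℓ)
    (hsize : (ℓ : ℝ) ≥ Real.log (2 / α) * c i ^ 2 / (2 * ε ^ 2)) :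
    ((Finset.univ.filter
        (fun ω : Fin ℓ → {σ : N ≃ Fin (Fintype.card N) // σ ∈ compatPerms P} =>
          ε ≤ |estimator c E P i ℓ ω - RAU c E P i|)).card : ℝ) /
      (Fintype.card (Fin ℓ → {σ : N ≃ Fin (Fintype.card N) // σ ∈ compatPerms P}) : ℝ)
      ≤ α := by
  set S := {σ : N ≃ Fin (Fintype.card N) // σ ∈ compatPerms P} with hS
  set f : S → ℝ := fun s => payment c E s.1 i with hf
  set B : ℝ := c i with hB
  have hcardfun : Fintype.card (Fin ℓ → S) = Fintype.card S ^ ℓ := by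
    rw [Fintype.card_fun, Fintype.card_fin]
  rcases Nat.eq_zero_or_pos (Fintype.card S) with hzero | hpos
  · rw [hcardfun, hzero, zero_pow (by omega)]
    simp only [Nat.cast_zero, div_zero]
    exact hα0.le
  haveI : Nonempty S := Fintype.card_pos_iff.mp hpos
  have hnpos : (0:ℝ) < (Fintype.card S : ℝ) := by exact_mod_cast hpos
  set n : ℝ := (Fintype.card S : ℝ) with hn
  have hℓpos : (0:ℝ) < (ℓ : ℝ) := by exact_mod_cast hℓ
  -- bounds on f
  have hf0 : ∀ s : S, 0 ≤ f s := fun s => le_min (hc i) (le_max_left _ _)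
  have hf1 : ∀ s : S, f s ≤ B := fun s => min_le_left _ _
  -- RAU equals the mean of f
  have hRAU : RAU c E P i = (∑ s : S, f s) / n := by
    rw [RAU, hn]
    have h1 : ∑ s : S, f s = ∑ σ ∈ compatPerms P, payment c E σ i :=
      Finset.sum_coe_sort (compatPerms P) (fun σ => payment c E σ i)
    have h2 : (Fintype.card S : ℝ) = ((compatPerms P).card : ℝ) := by
      norm_cast
      convert Fintype.card_coe (compatPerms P) using 2
    rw [h1, h2, one_div, inv_mul_eq_div]
  set g : S → ℝ := fun s => B - f s with hg
  have hg0 : ∀ s : S, 0 ≤ g s := fun s => by have := hf1 s; simp [hg]; linarith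
  have hg1 : ∀ s : S, g s ≤ B := fun s => by have := hf0 s; simp [hg]; linarith
  have hsumg : ∑ s : S, g s = n * B - ∑ s : S, f s := by
    rw [hg]
    simp [Finset.sum_sub_distrib, Finset.card_univ, hn, mul_comm]
  -- event inclusion
  have hsub : (Finset.univ.filter
        (fun ω : Fin ℓ → S => ε ≤ |estimator c E P i ℓ ω - RAU c E P i|))
      ⊆ (Finset.univ.filter (fun ω : Fin ℓ → S =>
            (∑ s, f s) / n * ℓ + ℓ * ε ≤ ∑ k, f (ω k)))
        ∪ (Finset.univ.filter (fun ω : Fin ℓ → S =>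
            (∑ s, g s) / n * ℓ + ℓ * ε ≤ ∑ k, g (ω k))) := by
    intro ω hω
    rw [Finset.mem_filter] at hω
    have hωabs := hω.2
    have hest : estimator c E P i ℓ ω = (1 / (ℓ:ℝ)) * ∑ k, f (ω k) := rfl
    rw [hest, hRAU] at hωabs
    rw [Finset.mem_union, Finset.mem_filter, Finset.mem_filter]
    set T : ℝ := ∑ k, f (ω k) with hT
    set m : ℝ := (∑ s : S, f s) / n with hm
    have hsumgk : ∑ k, g (ω k) = ℓ * B - T := by
      rw [hg, hT]
      simp [Finset.sum_sub_distrib, mul_comm]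
    rcases le_abs.mp hωabs with hcase | hcase
    · left
      refine ⟨Finset.mem_univ _, ?_⟩
      have h := mul_le_mul_of_nonneg_right hcase hℓpos.le
      have heq : (1 / (ℓ:ℝ) * T - m) * ℓ = T - m * ℓ := by
        field_simp
      rw [heq] at h
      linarith
    · right
      refine ⟨Finset.mem_univ _, ?_⟩
      rw [hsumg, hsumgk]
      have hmg : (n * B - ∑ s : S, f s) / n = B - m := by
        rw [hm]
        field_simp
      rw [hmg]
      have h := mul_le_mul_of_nonneg_right hcase hℓpos.le
      have heq : (-(1 / (ℓ:ℝ) * T - m)) * ℓ = m * ℓ - T := by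
        field_simp
        ring
      rw [heq] at h
      linarith
  -- apply the one-sided bounds
  have bound1 := onesided_hoeffding f B hci hf0 hf1 ℓ ε hε
  have bound2 := onesided_hoeffding g B hci hg0 hg1 ℓ ε hε
  have hcard : ((Finset.univ.filter
        (fun ω : Fin ℓ → S => ε ≤ |estimator c E P i ℓ ω - RAU c E P i|)).card : ℝ)
      ≤ 2 * (n ^ ℓ * Real.exp (-(2 * ℓ * ε ^ 2 / B ^ 2))) := by
    have h1 := Finset.card_le_card hsub
    have h2 := Finset.card_union_le
      (Finset.univ.filter (fun ω : Fin ℓ → S =>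
            (∑ s, f s) / n * ℓ + ℓ * ε ≤ ∑ k, f (ω k)))
      (Finset.univ.filter (fun ω : Fin ℓ → S =>
            (∑ s, g s) / n * ℓ + ℓ * ε ≤ ∑ k, g (ω k)))
    have h3 : ((Finset.univ.filter
        (fun ω : Fin ℓ → S => ε ≤ |estimator c E P i ℓ ω - RAU c E P i|)).card : ℝ)
        ≤ ((Finset.univ.filter (fun ω : Fin ℓ → S =>
            (∑ s, f s) / n * ℓ + ℓ * ε ≤ ∑ k, f (ω k))).card : ℝ)
          + ((Finset.univ.filter (fun ω : Fin ℓ → S =>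
            (∑ s, g s) / n * ℓ + ℓ * ε ≤ ∑ k, g (ω k))).card : ℝ) := by
      exact_mod_cast le_trans h1 h2
    calc ((Finset.univ.filter
        (fun ω : Fin ℓ → S => ε ≤ |estimator c E P i ℓ ω - RAU c E P i|)).card : ℝ)
        ≤ _ + _ := h3
      _ ≤ n ^ ℓ * Real.exp (-(2 * ℓ * ε ^ 2 / B ^ 2))
            + n ^ ℓ * Real.exp (-(2 * ℓ * ε ^ 2 / B ^ 2)) := add_le_add bound1 bound2
      _ = 2 * (n ^ ℓ * Real.exp (-(2 * ℓ * ε ^ 2 / B ^ 2))) := by ring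
  -- final tail bound
  have htail : 2 * Real.exp (-(2 * ℓ * ε ^ 2 / B ^ 2)) ≤ α := by
    have h2α : (0:ℝ) < 2 / α := by positivity
    have hlog : Real.log (2 / α) ≤ 2 * ℓ * ε ^ 2 / B ^ 2 := by
      rw [le_div_iff₀ (by positivity : (0:ℝ) < B ^ 2)]
      have := (div_le_iff₀ (by positivity : (0:ℝ) < 2 * ε ^ 2)).mp hsize
      nlinarith
    have : Real.exp (-(2 * ℓ * ε ^ 2 / B ^ 2)) ≤ Real.exp (-Real.log (2 / α)) :=
      Real.exp_le_exp.mpr (by linarith)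
    have hval : Real.exp (-Real.log (2 / α)) = α / 2 := by
      rw [Real.exp_neg, Real.exp_log h2α]
      rw [inv_div]
    rw [hval] at this
    linarith
  rw [hcardfun]
  rw [div_le_iff₀ (by exact_mod_cast pow_pos hpos ℓ : (0:ℝ) < ((Fintype.card S ^ ℓ : ℕ) : ℝ))]
  have hcast : ((Fintype.card S ^ ℓ : ℕ) : ℝ) = n ^ ℓ := by
    push_cast [hn]
    ring
  rw [hcast]
  calc ((Finset.univ.filter
        (fun ω : Fin ℓ → S => ε ≤ |estimator c E P i ℓ ω - RAU c E P i|)).card : ℝ)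
      ≤ 2 * (n ^ ℓ * Real.exp (-(2 * ℓ * ε ^ 2 / B ^ 2))) := hcard
    _ = (2 * Real.exp (-(2 * ℓ * ε ^ 2 / B ^ 2))) * n ^ ℓ := by ring
    _ ≤ α * n ^ ℓ := by
        apply mul_le_mul_of_nonneg_right htail (by positivity)
end

section
/- Let (N,c,E,P) be a bankruptcy problem with a priori unions, i ∈ N with c_i > 0, ε > 0 and α ∈ (0,1). Let ℓ ≥ 1 and equip Π_P(N)^ℓ with the ℓ-fold product of the uniform probability measure on Π_P(N); define the estimator RA̅^P_i(σ_1,…,σ_ℓ) = (1/ℓ) Σ_{k=1}^{ℓ} x(σ_k)_i. If ℓ ≥ min{ 1/(4αε²), ln(2/α)/(2ε²) } · c_i², then ℙ( |RA̅^P_i − RA^P_i| ≥ ε ) ≤ α. -/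
open Finset
open scoped Classical

section Aux

open Real in
/-- Core of Hoeffding's lemma: `1 - p + p e^u ≤ exp (p u + u²/8)` for `p ∈ [0,1]`. -/
lemma hoeff_core (p : ℝ) (hp0 : 0 ≤ p) (hp1 : p ≤ 1) (u : ℝ) :
    1 - p + p * Real.exp u ≤ Real.exp (p * u + u ^ 2 / 8) := by
  set D : ℝ → ℝ := fun u => 1 - p + p * Real.exp u with hDdef
  have hD : ∀ u, 0 < D u := by
    intro u
    rcases lt_or_eq_of_le hp1 with h | h
    · have : 0 < 1 - p := by linarith
      have : 0 ≤ p * Real.exp u := mul_nonneg hp0 (Real.exp_pos u).le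
      simp only [hDdef]; linarith
    · simp only [hDdef, h]
      simpa using Real.exp_pos u
  set q : ℝ → ℝ := fun u => p * Real.exp u / D u with hqdef
  have hq0 : ∀ u, 0 ≤ q u := fun u =>
    div_nonneg (mul_nonneg hp0 (Real.exp_pos u).le) (hD u).le
  have hq1 : ∀ u, q u ≤ 1 := by
    intro u
    rw [hqdef, div_le_one (hD u)]
    have : 0 ≤ 1 - p := by linarith
    simp only [hDdef]; linarith
  have hDderiv : ∀ u, HasDerivAt D (p * Real.exp u) u := by
    intro u
    exact ((Real.hasDerivAt_exp u).const_mul p).const_add (1 - p)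
  have hqderiv : ∀ u, HasDerivAt q (q u * (1 - q u)) u := by
    intro u
    have h := ((Real.hasDerivAt_exp u).const_mul p).div (hDderiv u) (hD u).ne'
    refine h.congr_deriv ?_
    have hDu := (hD u).ne'
    simp only [hqdef]
    field_simp
  -- G is the derivative of  u²/8 - (log (D u) - p u)
  set G : ℝ → ℝ := fun u => u / 4 + p - q u with hGdef
  have hGderiv : ∀ u, HasDerivAt G (1 / 4 - q u * (1 - q u)) u := by
    intro u
    have h := ((hasDerivAt_id u).div_const 4).add_const p
    exact h.sub (hqderiv u)
  have hGmono : Monotone G := by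
    apply monotone_of_hasDerivAt_nonneg hGderiv
    intro u
    have h1 := hq0 u
    have h2 := hq1 u
    simp only [Pi.zero_apply]
    nlinarith [sq_nonneg (q u - 1/2)]
  have hG0 : G 0 = 0 := by
    simp [hGdef, hqdef, hDdef]
  set h : ℝ → ℝ := fun u => u ^ 2 / 8 - (Real.log (D u) - p * u) with hhdef
  have hhderiv : ∀ u, HasDerivAt h (G u) u := by
    intro u
    have hlog : HasDerivAt (fun u => Real.log (D u)) (p * Real.exp u / D u) u :=
      (hDderiv u).log (hD u).ne'
    have h1 : HasDerivAt (fun u : ℝ => u ^ 2 / 8) (u / 4) u := by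
      have := (hasDerivAt_pow 2 u).div_const 8
      refine this.congr_deriv ?_; norm_num; ring
    have h2 := h1.sub (hlog.sub ((hasDerivAt_id u).const_mul p))
    refine h2.congr_deriv ?_
    simp only [hGdef, hqdef]
    ring
  have hh0 : h 0 = 0 := by simp [hhdef, hDdef]
  have key : ∀ u, 0 ≤ h u := by
    intro u
    rcases le_total 0 u with hu | hu
    · have mono : MonotoneOn h (Set.Ici (0:ℝ)) := by
        apply monotoneOn_of_hasDerivWithinAt_nonneg (convex_Ici 0)
          (fun x _ => (hhderiv x).continuousAt.continuousWithinAt)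
          (fun x _ => (hhderiv x).hasDerivWithinAt)
        intro x hx
        rw [interior_Ici] at hx
        have := hGmono (le_of_lt hx)
        rw [hG0] at this
        exact this
      have := mono Set.self_mem_Ici hu hu
      rwa [hh0] at this
    · have anti : AntitoneOn h (Set.Iic (0:ℝ)) := by
        apply antitoneOn_of_hasDerivWithinAt_nonpos (convex_Iic 0)
          (fun x _ => (hhderiv x).continuousAt.continuousWithinAt)
          (fun x _ => (hhderiv x).hasDerivWithinAt)
        intro x hx
        rw [interior_Iic] at hx
        have := hGmono (le_of_lt hx)
        rw [hG0] at this
        exact this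
      have := anti hu Set.self_mem_Iic hu
      rwa [hh0] at this
  have := key u
  have hlog : Real.log (D u) ≤ p * u + u ^ 2 / 8 := by
    simp only [hhdef] at this; linarith
  calc D u = Real.exp (Real.log (D u)) := (Real.exp_log (hD u)).symm
    _ ≤ Real.exp (p * u + u ^ 2 / 8) := Real.exp_le_exp.2 hlog

/-- mgf bound for a `[0,c]`-valued function on a finite uniform space. -/
lemma mgf_bound {S : Type} [Fintype S] [Nonempty S] (f : S → ℝ) (c t : ℝ) (hc : 0 < c)
    (h0 : ∀ σ, 0 ≤ f σ) (h1 : ∀ σ, f σ ≤ c) :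
    ∑ σ : S, Real.exp (t * f σ) ≤
      (Fintype.card S : ℝ) *
        Real.exp (t * ((∑ σ : S, f σ) / (Fintype.card S : ℝ)) + t ^ 2 * c ^ 2 / 8) := by
  set s : ℝ := (Fintype.card S : ℝ) with hs
  have hspos : (0:ℝ) < s := by
    simp only [hs]
    exact_mod_cast Fintype.card_pos
  set μ : ℝ := (∑ σ : S, f σ) / s with hμ
  have hF0 : 0 ≤ ∑ σ : S, f σ := Finset.sum_nonneg fun σ _ => h0 σ
  have hF1 : ∑ σ : S, f σ ≤ s * c := by
    calc ∑ σ : S, f σ ≤ ∑ _σ : S, c := Finset.sum_le_sum fun σ _ => h1 σ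
      _ = s * c := by simp [hs, mul_comm]
  have hμ0 : 0 ≤ μ := div_nonneg hF0 hspos.le
  have hμ1 : μ ≤ c := by
    rw [hμ, div_le_iff₀ hspos]
    linarith [hF1]
  set p : ℝ := μ / c with hp
  have hp0 : 0 ≤ p := div_nonneg hμ0 hc.le
  have hp1 : p ≤ 1 := by rw [hp, div_le_one hc]; exact hμ1
  -- pointwise convexity bound
  have conv : ∀ σ : S, Real.exp (t * f σ) ≤ (1 - f σ / c) + (f σ / c) * Real.exp (t * c) := by
    intro σ
    have hl0 : 0 ≤ f σ / c := div_nonneg (h0 σ) hc.le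
    have hl1 : f σ / c ≤ 1 := by rw [div_le_one hc]; exact h1 σ
    have := convexOn_exp.2 (Set.mem_univ (0:ℝ)) (Set.mem_univ (t * c))
      (by linarith : (0:ℝ) ≤ 1 - f σ / c) hl0 (by ring)
    simp only [smul_eq_mul, mul_zero, zero_add, Real.exp_zero, mul_one] at this
    have harg : f σ / c * (t * c) = t * f σ := by field_simp
    rw [harg] at this
    linarith
  calc ∑ σ : S, Real.exp (t * f σ)
      ≤ ∑ σ : S, ((1 - f σ / c) + (f σ / c) * Real.exp (t * c)) :=
        Finset.sum_le_sum fun σ _ => conv σ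
    _ = s * (1 - p + p * Real.exp (t * c)) := by
        rw [Finset.sum_add_distrib, Finset.sum_sub_distrib, ← Finset.sum_mul, ← Finset.sum_div]
        simp only [Finset.sum_const, Finset.card_univ, nsmul_eq_mul, mul_one]
        rw [hp, hμ]
        field_simp
        ring
    _ ≤ s * Real.exp (p * (t * c) + (t * c) ^ 2 / 8) := by
        have := hoeff_core p hp0 hp1 (t * c)
        exact mul_le_mul_of_nonneg_left this hspos.le
    _ = s * Real.exp (t * μ + t ^ 2 * c ^ 2 / 8) := by
        congr 1
        rw [hp]
        field_simp

/-- centered version -/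
lemma mgf_bound_centered {S : Type} [Fintype S] [Nonempty S] (f : S → ℝ) (c t : ℝ) (hc : 0 < c)
    (h0 : ∀ σ, 0 ≤ f σ) (h1 : ∀ σ, f σ ≤ c) :
    ∑ σ : S, Real.exp (t * (f σ - (∑ σ' : S, f σ') / (Fintype.card S : ℝ))) ≤
      (Fintype.card S : ℝ) * Real.exp (t ^ 2 * c ^ 2 / 8) := by
  set μ : ℝ := (∑ σ' : S, f σ') / (Fintype.card S : ℝ) with hμ
  have key := mgf_bound f c t hc h0 h1
  have expand : ∀ σ : S, Real.exp (t * (f σ - μ)) = Real.exp (t * f σ) * Real.exp (-(t * μ)) := by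
    intro σ
    rw [← Real.exp_add]
    congr 1
    ring
  calc ∑ σ : S, Real.exp (t * (f σ - μ))
      = (∑ σ : S, Real.exp (t * f σ)) * Real.exp (-(t * μ)) := by
        rw [Finset.sum_mul]
        exact Finset.sum_congr rfl fun σ _ => expand σ
    _ ≤ ((Fintype.card S : ℝ) * Real.exp (t * μ + t ^ 2 * c ^ 2 / 8)) * Real.exp (-(t * μ)) :=
        mul_le_mul_of_nonneg_right key (Real.exp_pos _).le
    _ = (Fintype.card S : ℝ) * Real.exp (t ^ 2 * c ^ 2 / 8) := by
        rw [mul_assoc, ← Real.exp_add]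
        congr 2
        ring

/-- Product factorization: sum over functions of a product of per-coordinate factors. -/
lemma prod_form {S : Type} [Fintype S] {ℓ : ℕ} (H : Fin ℓ → S → ℝ) :
    ∑ ω : Fin ℓ → S, ∏ k : Fin ℓ, H k (ω k) = ∏ k : Fin ℓ, ∑ σ : S, H k σ :=
  (Fintype.prod_sum H).symm

/-- Second moment identity for a centered function. -/
lemma second_moment {S : Type} [Fintype S] {ℓ : ℕ} (g : S → ℝ) (hg : ∑ σ : S, g σ = 0) :
    ∑ ω : Fin ℓ → S, (∑ k : Fin ℓ, g (ω k)) ^ 2 =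
      (ℓ : ℝ) * (Fintype.card S : ℝ) ^ (ℓ - 1) * ∑ σ : S, g σ ^ 2 := by
  have expand : ∀ ω : Fin ℓ → S, (∑ k : Fin ℓ, g (ω k)) ^ 2 =
      ∑ k : Fin ℓ, ∑ k' : Fin ℓ, g (ω k) * g (ω k') := by
    intro ω
    rw [sq, Finset.sum_mul_sum]
  have T : ∀ k k' : Fin ℓ, ∑ ω : Fin ℓ → S, g (ω k) * g (ω k') =
      if k = k' then (Fintype.card S : ℝ) ^ (ℓ - 1) * ∑ σ : S, g σ ^ 2 else 0 := by
    intro k k'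
    by_cases hkk : k = k'
    · subst hkk
      rw [if_pos rfl]
      have : ∀ ω : Fin ℓ → S, g (ω k) * g (ω k) =
          ∏ m : Fin ℓ, (if m = k then g (ω m) ^ 2 else 1) := by
        intro ω
        rw [Finset.prod_ite_eq' Finset.univ k (fun m => g (ω m) ^ 2)]
        simp [sq]
      rw [Finset.sum_congr rfl fun ω _ => this ω]
      rw [show (∑ ω : Fin ℓ → S, ∏ m : Fin ℓ, if m = k then g (ω m) ^ 2 else 1)
          = ∏ m : Fin ℓ, ∑ σ : S, (if m = k then g σ ^ 2 else 1) from
        prod_form (fun m σ => if m = k then g σ ^ 2 else 1)]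
      have heach : ∀ m : Fin ℓ, (∑ σ : S, if m = k then g σ ^ 2 else 1) =
          if m = k then ∑ σ : S, g σ ^ 2 else (Fintype.card S : ℝ) := by
        intro m
        by_cases hm : m = k <;> simp [hm]
      rw [Finset.prod_congr rfl fun m _ => heach m]
      rw [← Finset.mul_prod_erase Finset.univ _ (Finset.mem_univ k)]
      rw [if_pos rfl]
      rw [Finset.prod_congr rfl (fun m hm => if_neg (Finset.mem_erase.1 hm).1)]
      rw [Finset.prod_const, Finset.card_erase_of_mem (Finset.mem_univ k)]
      simp [mul_comm, Finset.card_univ]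
    · rw [if_neg hkk]
      have : ∀ ω : Fin ℓ → S, g (ω k) * g (ω k') =
          ∏ m : Fin ℓ, (if m = k then g (ω m) else if m = k' then g (ω m) else 1) := by
        intro ω
        rw [Finset.prod_eq_mul_of_mem k k' (Finset.mem_univ k) (Finset.mem_univ k') hkk
          (fun m _ hm => by simp [hm.1, hm.2])]
        simp [hkk, Ne.symm hkk]
      rw [Finset.sum_congr rfl fun ω _ => this ω]
      rw [show (∑ ω : Fin ℓ → S, ∏ m : Fin ℓ,
            if m = k then g (ω m) else if m = k' then g (ω m) else 1)
          = ∏ m : Fin ℓ, ∑ σ : S, (if m = k then g σ else if m = k' then g σ else 1) from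
        prod_form (fun m σ => if m = k then g σ else if m = k' then g σ else 1)]
      apply Finset.prod_eq_zero (Finset.mem_univ k)
      simp [hg]
  calc ∑ ω : Fin ℓ → S, (∑ k : Fin ℓ, g (ω k)) ^ 2
      = ∑ k : Fin ℓ, ∑ k' : Fin ℓ, ∑ ω : Fin ℓ → S, g (ω k) * g (ω k') := by
        rw [Finset.sum_congr rfl fun ω _ => expand ω]
        rw [Finset.sum_comm]
        apply Finset.sum_congr rfl
        intro k _
        rw [Finset.sum_comm]
    _ = ∑ k : Fin ℓ, ((Fintype.card S : ℝ) ^ (ℓ - 1) * ∑ σ : S, g σ ^ 2) := by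
        apply Finset.sum_congr rfl
        intro k _
        rw [Finset.sum_congr rfl fun k' _ => T k k']
        simp
    _ = (ℓ : ℝ) * (Fintype.card S : ℝ) ^ (ℓ - 1) * ∑ σ : S, g σ ^ 2 := by
        rw [Finset.sum_const, Finset.card_univ, Fintype.card_fin, nsmul_eq_mul]
        ring

/-- Variance bound: for `f` valued in `[0,c]`, the sum of squared deviations from the
mean is at most `card S * c² / 4`. -/
lemma sum_sq_dev_le {S : Type} [Fintype S] [Nonempty S] (f : S → ℝ) (c : ℝ)
    (h0 : ∀ σ, 0 ≤ f σ) (h1 : ∀ σ, f σ ≤ c) :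
    ∑ σ : S, (f σ - (∑ σ' : S, f σ') / (Fintype.card S : ℝ)) ^ 2 ≤
      (Fintype.card S : ℝ) * c ^ 2 / 4 := by
  set s : ℝ := (Fintype.card S : ℝ) with hs
  have hspos : (0:ℝ) < s := by simp only [hs]; exact_mod_cast Fintype.card_pos
  set μ : ℝ := (∑ σ' : S, f σ') / s with hμ
  have hsum : ∑ σ : S, (f σ - μ) = 0 := by
    rw [Finset.sum_sub_distrib, Finset.sum_const, Finset.card_univ, nsmul_eq_mul, hμ]
    field_simp
    simp [hs]
  have key : ∑ σ : S, (f σ - μ) ^ 2 ≤ ∑ σ : S, (f σ - c / 2) ^ 2 := by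
    have expand : ∀ σ : S, (f σ - c / 2) ^ 2 =
        (f σ - μ) ^ 2 + 2 * (μ - c / 2) * (f σ - μ) + (μ - c / 2) ^ 2 := by
      intro σ; ring
    rw [Finset.sum_congr rfl fun σ _ => expand σ]
    rw [Finset.sum_add_distrib, Finset.sum_add_distrib, ← Finset.mul_sum, hsum]
    have : (0:ℝ) ≤ ∑ _σ : S, (μ - c / 2) ^ 2 :=
      Finset.sum_nonneg fun σ _ => sq_nonneg _
    linarith
  refine le_trans key ?_
  have each : ∀ σ : S, (f σ - c / 2) ^ 2 ≤ (c / 2) ^ 2 := by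
    intro σ
    have := h0 σ
    have := h1 σ
    nlinarith
  calc ∑ σ : S, (f σ - c / 2) ^ 2 ≤ ∑ _σ : S, (c / 2) ^ 2 :=
        Finset.sum_le_sum fun σ _ => each σ
    _ = s * c ^ 2 / 4 := by
        rw [Finset.sum_const, Finset.card_univ, nsmul_eq_mul]
        ring

/-- One-sided Hoeffding counting bound. -/
lemma one_sided {S : Type} [Fintype S] [Nonempty S] (f : S → ℝ) (c : ℝ) (hc : 0 < c)
    (h0 : ∀ σ, 0 ≤ f σ) (h1 : ∀ σ, f σ ≤ c) (ε : ℝ) (hε : 0 < ε) (ℓ : ℕ) :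
    ((Finset.univ.filter (fun ω : Fin ℓ → S =>
        (ℓ : ℝ) * ε ≤ ∑ k : Fin ℓ, (f (ω k) - (∑ σ' : S, f σ') / (Fintype.card S : ℝ)))).card : ℝ)
      ≤ (Fintype.card S : ℝ) ^ ℓ * Real.exp (-(2 * ℓ * ε ^ 2 / c ^ 2)) := by
  set μ : ℝ := (∑ σ' : S, f σ') / (Fintype.card S : ℝ) with hμ
  set g : S → ℝ := fun σ => f σ - μ with hg
  set t : ℝ := 4 * ε / c ^ 2 with ht
  have htpos : 0 < t := by positivity
  set A := Finset.univ.filter (fun ω : Fin ℓ → S => (ℓ : ℝ) * ε ≤ ∑ k : Fin ℓ, g (ω k)) with hA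
  -- Chernoff: card A * exp (t * ℓ * ε) ≤ ∑_ω exp (t * ∑_k g (ω k))
  have step1 : (A.card : ℝ) * Real.exp (t * (ℓ * ε)) ≤
      ∑ ω : Fin ℓ → S, Real.exp (t * ∑ k : Fin ℓ, g (ω k)) := by
    have hsub : ∑ ω ∈ A, Real.exp (t * ∑ k : Fin ℓ, g (ω k)) ≤
        ∑ ω : Fin ℓ → S, Real.exp (t * ∑ k : Fin ℓ, g (ω k)) :=
      Finset.sum_le_sum_of_subset_of_nonneg (Finset.filter_subset _ _)
        (fun ω _ _ => (Real.exp_pos _).le)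
    refine le_trans ?_ hsub
    calc (A.card : ℝ) * Real.exp (t * (ℓ * ε)) = ∑ _ω ∈ A, Real.exp (t * (ℓ * ε)) := by
            simp [mul_comm]
        _ ≤ ∑ ω ∈ A, Real.exp (t * ∑ k : Fin ℓ, g (ω k)) := by
            apply Finset.sum_le_sum
            intro ω hω
            rw [hA, Finset.mem_filter] at hω
            exact Real.exp_le_exp.2 (mul_le_mul_of_nonneg_left hω.2 htpos.le)
  -- factorize
  have step2 : ∑ ω : Fin ℓ → S, Real.exp (t * ∑ k : Fin ℓ, g (ω k)) =
      (∑ σ : S, Real.exp (t * g σ)) ^ ℓ := by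
    rw [Fintype.sum_pow]
    apply Finset.sum_congr rfl
    intro ω _
    rw [Finset.mul_sum, Real.exp_sum]
  have step3 : (∑ σ : S, Real.exp (t * g σ)) ^ ℓ ≤
      ((Fintype.card S : ℝ) * Real.exp (t ^ 2 * c ^ 2 / 8)) ^ ℓ := by
    apply pow_le_pow_left₀ (Finset.sum_nonneg fun σ _ => (Real.exp_pos _).le)
    exact mgf_bound_centered f c t hc h0 h1
  have exp_id : Real.exp (t * (ℓ * ε)) ≠ 0 := (Real.exp_pos _).ne'
  have combined : (A.card : ℝ) * Real.exp (t * (ℓ * ε)) ≤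
      (Fintype.card S : ℝ) ^ ℓ * Real.exp (ℓ * (t ^ 2 * c ^ 2 / 8)) := by
    refine le_trans step1 ?_
    rw [step2]
    refine le_trans step3 ?_
    rw [mul_pow, ← Real.exp_nat_mul]
  have final : (A.card : ℝ) ≤ (Fintype.card S : ℝ) ^ ℓ *
      Real.exp (ℓ * (t ^ 2 * c ^ 2 / 8) - t * (ℓ * ε)) := by
    rw [Real.exp_sub, ← mul_div_assoc]
    rw [le_div_iff₀ (Real.exp_pos _)]
    exact combined
  have harith : (ℓ : ℝ) * (t ^ 2 * c ^ 2 / 8) - t * (ℓ * ε) = -(2 * ℓ * ε ^ 2 / c ^ 2) := by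
    rw [ht]
    field_simp
    ring
  rw [harith] at final
  exact final

lemma key {S : Type} [Fintype S] [Nonempty S] (f : S → ℝ) (ci ε α : ℝ)
    (h0 : ∀ σ, 0 ≤ f σ) (h1 : ∀ σ, f σ ≤ ci) (hci : 0 < ci) (hε : 0 < ε)
    (hα0 : 0 < α) (hα1 : α < 1) (ℓ : ℕ) (hℓ : 1 ≤ ℓ)
    (hsize : (ℓ : ℝ) ≥
      min (1 / (4 * α * ε ^ 2)) (Real.log (2 / α) / (2 * ε ^ 2)) * ci ^ 2) :
    ((Finset.univ.filter (fun ω : Fin ℓ → S =>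
        ε ≤ |(1 / (ℓ : ℝ)) * ∑ k : Fin ℓ, f (ω k)
            - (1 / ((Fintype.card S : ℝ))) * ∑ σ : S, f σ|)).card : ℝ)
      ≤ α * (Fintype.card S : ℝ) ^ ℓ := by
  set s : ℝ := (Fintype.card S : ℝ) with hs
  have hspos : (0:ℝ) < s := by simp only [hs]; exact_mod_cast Fintype.card_pos
  have hℓpos : (0:ℝ) < (ℓ : ℝ) := by exact_mod_cast hℓ
  set μ : ℝ := (∑ σ' : S, f σ') / s with hμ
  -- rewrite the event
  have hdev : ∀ ω : Fin ℓ → S,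
      (1 / (ℓ : ℝ)) * ∑ k : Fin ℓ, f (ω k) - (1 / s) * ∑ σ : S, f σ
        = (∑ k : Fin ℓ, (f (ω k) - μ)) / (ℓ : ℝ) := by
    intro ω
    rw [Finset.sum_sub_distrib, Finset.sum_const, Finset.card_univ, Fintype.card_fin,
      nsmul_eq_mul, hμ]
    generalize ∑ k : Fin ℓ, f (ω k) = X
    generalize ∑ σ : S, f σ = F
    rw [eq_div_iff hℓpos.ne']
    field_simp
  have hevent : ∀ ω : Fin ℓ → S,
      (ε ≤ |(1 / (ℓ : ℝ)) * ∑ k : Fin ℓ, f (ω k) - (1 / s) * ∑ σ : S, f σ|)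
        ↔ ((ℓ : ℝ) * ε ≤ |∑ k : Fin ℓ, (f (ω k) - μ)|) := by
    intro ω
    rw [hdev ω, abs_div, abs_of_pos hℓpos, le_div_iff₀ hℓpos, mul_comm]
  rw [Finset.filter_congr (fun ω _ => by rw [hevent ω])]
  set A := Finset.univ.filter (fun ω : Fin ℓ → S =>
      (ℓ : ℝ) * ε ≤ |∑ k : Fin ℓ, (f (ω k) - μ)|) with hA
  rcases le_total (1 / (4 * α * ε ^ 2)) (Real.log (2 / α) / (2 * ε ^ 2)) with hm | hm
  · -- Chebyshev case
    rw [min_eq_left hm] at hsize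
    have hsize' : ci ^ 2 / (4 * α * ε ^ 2) ≤ (ℓ : ℝ) := by
      calc ci ^ 2 / (4 * α * ε ^ 2) = 1 / (4 * α * ε ^ 2) * ci ^ 2 := by ring
        _ ≤ (ℓ : ℝ) := hsize
    have hsumzero : ∑ σ : S, (f σ - μ) = 0 := by
      rw [Finset.sum_sub_distrib, Finset.sum_const, Finset.card_univ, nsmul_eq_mul, hμ]
      field_simp
      simp [hs]
    have cheb : (A.card : ℝ) * ((ℓ : ℝ) * ε) ^ 2 ≤
        (ℓ : ℝ) * s ^ (ℓ - 1) * ∑ σ : S, (f σ - μ) ^ 2 := by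
      rw [← second_moment (fun σ => f σ - μ) hsumzero]
      calc (A.card : ℝ) * ((ℓ : ℝ) * ε) ^ 2
          = ∑ _ω ∈ A, ((ℓ : ℝ) * ε) ^ 2 := by simp [mul_comm]
        _ ≤ ∑ ω ∈ A, (∑ k : Fin ℓ, (f (ω k) - μ)) ^ 2 := by
            apply Finset.sum_le_sum
            intro ω hω
            rw [hA, Finset.mem_filter] at hω
            have h2 := pow_le_pow_left₀ (by positivity) hω.2 2
            rwa [sq_abs] at h2
        _ ≤ ∑ ω : Fin ℓ → S, (∑ k : Fin ℓ, (f (ω k) - μ)) ^ 2 :=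
            Finset.sum_le_sum_of_subset_of_nonneg (Finset.filter_subset _ _)
              (fun ω _ _ => sq_nonneg _)
    have hvar := sum_sq_dev_le f ci h0 h1
    have hpow : s ^ (ℓ - 1) * s = s ^ ℓ := by
      rw [← pow_succ]
      congr 1
      omega
    have cheb2 : (A.card : ℝ) * ((ℓ : ℝ) * ε) ^ 2 ≤ (ℓ : ℝ) * s ^ ℓ * ci ^ 2 / 4 := by
      calc (A.card : ℝ) * ((ℓ : ℝ) * ε) ^ 2
          ≤ (ℓ : ℝ) * s ^ (ℓ - 1) * ∑ σ : S, (f σ - μ) ^ 2 := cheb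
        _ ≤ (ℓ : ℝ) * s ^ (ℓ - 1) * (s * ci ^ 2 / 4) := by
            apply mul_le_mul_of_nonneg_left hvar
            positivity
        _ = (ℓ : ℝ) * s ^ ℓ * ci ^ 2 / 4 := by
            rw [← hpow]; ring
    -- conclude: card A ≤ ci² / (4 ℓ ε²) * s^ℓ ≤ α s^ℓ
    have hfrac : ci ^ 2 / (4 * (ℓ : ℝ) * ε ^ 2) ≤ α := by
      rw [div_le_iff₀ (by positivity)]
      rw [div_le_iff₀ (by positivity)] at hsize'
      nlinarith
    have hcard : (A.card : ℝ) ≤ ci ^ 2 / (4 * (ℓ : ℝ) * ε ^ 2) * s ^ ℓ := by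
      rw [div_mul_eq_mul_div, le_div_iff₀ (by positivity)]
      calc (A.card : ℝ) * (4 * (ℓ : ℝ) * ε ^ 2)
          = 4 / (ℓ : ℝ) * ((A.card : ℝ) * ((ℓ : ℝ) * ε) ^ 2) := by
            field_simp
        _ ≤ 4 / (ℓ : ℝ) * ((ℓ : ℝ) * s ^ ℓ * ci ^ 2 / 4) := by
            apply mul_le_mul_of_nonneg_left cheb2 (by positivity)
        _ = ci ^ 2 * s ^ ℓ := by field_simp
    calc (A.card : ℝ) ≤ ci ^ 2 / (4 * (ℓ : ℝ) * ε ^ 2) * s ^ ℓ := hcard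
      _ ≤ α * s ^ ℓ := mul_le_mul_of_nonneg_right hfrac (by positivity)
  · -- Hoeffding case
    rw [min_eq_right hm] at hsize
    have hsize' : Real.log (2 / α) * ci ^ 2 ≤ 2 * (ℓ : ℝ) * ε ^ 2 := by
      rw [ge_iff_le, div_mul_eq_mul_div, div_le_iff₀ (by positivity)] at hsize
      nlinarith
    have hexp : Real.exp (-(2 * (ℓ : ℝ) * ε ^ 2 / ci ^ 2)) ≤ α / 2 := by
      have hlog : Real.log (α / 2) = -(Real.log (2 / α)) := by
        rw [Real.log_div hα0.ne' two_ne_zero, Real.log_div two_ne_zero hα0.ne']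
        ring
      have h2 : -(2 * (ℓ : ℝ) * ε ^ 2 / ci ^ 2) ≤ Real.log (α / 2) := by
        rw [hlog, neg_le_neg_iff, le_div_iff₀ (by positivity)]
        nlinarith
      calc Real.exp (-(2 * (ℓ : ℝ) * ε ^ 2 / ci ^ 2)) ≤ Real.exp (Real.log (α / 2)) :=
            Real.exp_le_exp.2 h2
        _ = α / 2 := Real.exp_log (by positivity)
    -- split the two-sided event
    set B1 := Finset.univ.filter (fun ω : Fin ℓ → S =>
        (ℓ : ℝ) * ε ≤ ∑ k : Fin ℓ, (f (ω k) - μ)) with hB1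
    set B2 := Finset.univ.filter (fun ω : Fin ℓ → S =>
        (ℓ : ℝ) * ε ≤ -∑ k : Fin ℓ, (f (ω k) - μ)) with hB2
    have hsubset : A ⊆ B1 ∪ B2 := by
      intro ω hω
      rw [hA, Finset.mem_filter] at hω
      rw [Finset.mem_union, hB1, hB2, Finset.mem_filter, Finset.mem_filter]
      rcases le_abs.1 hω.2 with h | h
      · exact Or.inl ⟨Finset.mem_univ ω, h⟩
      · exact Or.inr ⟨Finset.mem_univ ω, h⟩
    have hb1 : (B1.card : ℝ) ≤ s ^ ℓ * Real.exp (-(2 * ℓ * ε ^ 2 / ci ^ 2)) :=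
      one_sided f ci hci h0 h1 ε hε ℓ
    have hb2 : (B2.card : ℝ) ≤ s ^ ℓ * Real.exp (-(2 * ℓ * ε ^ 2 / ci ^ 2)) := by
      have := one_sided (fun σ => ci - f σ) ci hci
        (fun σ => by simpa using h1 σ) (fun σ => by simpa using h0 σ) ε hε ℓ
      have heq : ∀ ω : Fin ℓ → S,
          (∑ k : Fin ℓ, ((ci - f (ω k)) - (∑ σ' : S, (ci - f σ')) / s))
            = -∑ k : Fin ℓ, (f (ω k) - μ) := by
        intro ω
        rw [← Finset.sum_neg_distrib]
        apply Finset.sum_congr rfl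
        intro k _
        rw [Finset.sum_sub_distrib, Finset.sum_const, Finset.card_univ, nsmul_eq_mul, hμ]
        field_simp
        ring
      rw [hB2]
      rw [show (Finset.univ.filter (fun ω : Fin ℓ → S =>
          (ℓ : ℝ) * ε ≤ -∑ k : Fin ℓ, (f (ω k) - μ)))
        = (Finset.univ.filter (fun ω : Fin ℓ → S =>
          (ℓ : ℝ) * ε ≤ ∑ k : Fin ℓ, ((ci - f (ω k)) - (∑ σ' : S, (ci - f σ')) / s))) from
        Finset.filter_congr (fun ω _ => by rw [heq ω])]
      exact this
    have hcard : (A.card : ℝ) ≤ (B1.card : ℝ) + (B2.card : ℝ) := by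
      calc (A.card : ℝ) ≤ ((B1 ∪ B2).card : ℝ) := by
            exact_mod_cast Finset.card_le_card hsubset
        _ ≤ (B1.card : ℝ) + (B2.card : ℝ) := by
            exact_mod_cast Finset.card_union_le B1 B2
    calc (A.card : ℝ) ≤ (B1.card : ℝ) + (B2.card : ℝ) := hcard
      _ ≤ 2 * (s ^ ℓ * Real.exp (-(2 * ℓ * ε ^ 2 / ci ^ 2))) := by linarith
      _ ≤ 2 * (s ^ ℓ * (α / 2)) := by
          apply mul_le_mul_of_nonneg_left _ (by norm_num)
          exact mul_le_mul_of_nonneg_left hexp (by positivity)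
      _ = α * s ^ ℓ := by ring

end Aux

/-- (Lemma 1 of the paper.) If the sample size satisfies
`ℓ ≥ min (1/(4 α ε²)) (ln(2/α)/(2 ε²)) · c i ²`, then under the `ℓ`-fold product of the
uniform probability measure on `Π_P(N)` (i.e. the uniform measure on the finite product
space), `ℙ(|RA̅^P_i − RA^P_i| ≥ ε) ≤ α`. -/
theorem min_sample_size_bound {N : Type} [Fintype N] [DecidableEq N] [Nonempty N]
    (c : N → ℝ) (E : ℝ) (hc : ∀ i, 0 ≤ c i) (hE0 : 0 ≤ E) (hE : E ≤ ∑ j, c j)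
    (P : Finpartition (Finset.univ : Finset N)) (i : N) (hci : 0 < c i)
    (ε α : ℝ) (hε : 0 < ε) (hα0 : 0 < α) (hα1 : α < 1)
    (ℓ : ℕ) (hℓ : 1 ≤ ℓ)
    (hsize : (ℓ : ℝ) ≥
      min (1 / (4 * α * ε ^ 2)) (Real.log (2 / α) / (2 * ε ^ 2)) * c i ^ 2) :
    ((Finset.univ.filter
        (fun ω : Fin ℓ → {σ : N ≃ Fin (Fintype.card N) // σ ∈ compatPerms P} =>
          ε ≤ |estimator c E P i ℓ ω - RAU c E P i|)).card : ℝ) /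
      (Fintype.card (Fin ℓ → {σ : N ≃ Fin (Fintype.card N) // σ ∈ compatPerms P}) : ℝ)
      ≤ α := by

  set S := {σ : N ≃ Fin (Fintype.card N) // σ ∈ compatPerms P} with hS
  by_cases hne : Nonempty S
  · haveI := hne
    set f : S → ℝ := fun σ => payment c E σ.1 i with hf
    have hf0 : ∀ σ : S, 0 ≤ f σ := fun σ =>
      le_min (hc i) (le_max_left _ _)
    have hf1 : ∀ σ : S, f σ ≤ c i := fun σ => min_le_left _ _
    have hcards : Fintype.card S = (compatPerms P).card := Fintype.card_coe _
    have hsum : ∑ σ : S, f σ = ∑ σ ∈ compatPerms P, payment c E σ i := by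
      rw [hf]
      exact Finset.sum_coe_sort (compatPerms P) (fun σ => payment c E σ i)
    have hmatch : ∀ ω : Fin ℓ → S,
        estimator c E P i ℓ ω - RAU c E P i
          = (1 / (ℓ : ℝ)) * ∑ k : Fin ℓ, f (ω k)
            - (1 / ((Fintype.card S : ℝ))) * ∑ σ : S, f σ := by
      intro ω
      rw [estimator, RAU, hsum, hcards]
    have hcardfun : (Fintype.card (Fin ℓ → S) : ℝ) = (Fintype.card S : ℝ) ^ ℓ := by
      rw [Fintype.card_fun, Fintype.card_fin]
      push_cast
      ring
    have hkey := key f (c i) ε α hf0 hf1 hci hε hα0 hα1 ℓ hℓ hsize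
    rw [show (Finset.univ.filter (fun ω : Fin ℓ → S =>
        ε ≤ |estimator c E P i ℓ ω - RAU c E P i|))
      = (Finset.univ.filter (fun ω : Fin ℓ → S =>
        ε ≤ |(1 / (ℓ : ℝ)) * ∑ k : Fin ℓ, f (ω k)
            - (1 / ((Fintype.card S : ℝ))) * ∑ σ : S, f σ|)) from
      Finset.filter_congr (fun ω _ => by rw [hmatch ω])]
    rw [hcardfun]
    have hspos : (0:ℝ) < (Fintype.card S : ℝ) ^ ℓ := by
      have : 0 < Fintype.card S := Fintype.card_pos
      positivity
    rw [div_le_iff₀ hspos]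
    exact hkey
  · have hempty : IsEmpty S := not_nonempty_iff.1 hne
    have hnℓ : Nonempty (Fin ℓ) := ⟨⟨0, by omega⟩⟩
    have : IsEmpty (Fin ℓ → S) := by
      constructor
      intro ω
      exact hempty.elim (ω ⟨0, by omega⟩)
    have hzero : Fintype.card (Fin ℓ → S) = 0 := Fintype.card_eq_zero
    rw [hzero]
    simp
    exact hα0.le
end
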